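/- arXiv:1811.06460 — 4 statements merged into one kernel-verified Lean document; each statement's English description precedes it below -/
import Mathlib

section
/- Let n, m be strictly positive natural numbers and σ a fixed-point-free permutation of {1,…,m}. Given distinct elements a_i^j for 1 ≤ i ≤ m, 1 ≤ j ≤ n, consider any n sets of the form: the k-th set (1 ≤ k ≤ n) is { a_{i_k}^1, …, a_{i_k}^n } except that its k-th element is a_{σ(i_k)}^k (for k ≥ 2; the first set is { a_{i_1}^1, …, a_{i_1}^n } unmodified), where each i_k ∈ {1,…,m}. Then the intersection of these n sets has at most one element. -/
/-- **The filter lemma.** Let `n, m` be strictly positive natural numbers and `σ` a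
fixed-point-free permutation of `Fin m`. Given distinct elements `a i j`
(`i : Fin m`, `j : Fin n`), and choices `ι k ∈ Fin m` for each `k`, consider the `n`
sets where the `k`-th set is `{ a (ι k) 1, …, a (ι k) n }` except that (for `k ≠ 0`,
i.e. all but the first set) its `k`-th element is replaced by `a (σ (ι k)) k`.
Then the intersection of these `n` sets has at most one element. -/
theorem filter_lemma {α : Type} (n m : ℕ) (hn : 0 < n) (hm : 0 < m)
    (σ : Equiv.Perm (Fin m)) (hσ : ∀ i, σ i ≠ i)
    (a : Fin m → Fin n → α)
    (ha : Function.Injective (fun p : Fin m × Fin n => a p.1 p.2))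
    (ι : Fin n → Fin m) :
    (⋂ k : Fin n,
        { x : α | ∃ j : Fin n,
            x = if (k : ℕ) ≠ 0 ∧ j = k then a (σ (ι k)) j else a (ι k) j }).Subsingleton := by
  haveI : NeZero n := ⟨hn.ne'⟩
  have hinj : ∀ {i i' : Fin m} {j j' : Fin n}, a i j = a i' j' → i = i' ∧ j = j' := by
    intro i i' j j' h
    have h2 : (i, j) = (i', j') := ha h
    exact Prod.mk.injEq .. ▸ (Prod.ext_iff.mp h2)
  intro x hx y hy
  simp only [Set.mem_iInter, Set.mem_setOf_eq] at hx hy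
  -- key dichotomy for any element of the intersection
  have aux : ∀ (z : α)
      (hz : ∀ k : Fin n, ∃ j, z = if (k : ℕ) ≠ 0 ∧ j = k then a (σ (ι k)) j else a (ι k) j)
      (j : Fin n), z = a (ι 0) j →
      (j = 0 ∧ ∀ k, ι k = ι 0) ∨ (j ≠ 0 ∧ σ (ι j) = ι 0) := by
    intro z hz j hj
    by_cases hj0 : j = 0
    · left
      refine ⟨hj0, fun k => ?_⟩
      by_cases hk0 : (k : ℕ) = 0
      · have : k = 0 := Fin.ext hk0
        rw [this]
      · obtain ⟨j', hj'⟩ := hz k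
        by_cases hjk : j' = k
        · rw [if_pos ⟨hk0, hjk⟩] at hj'
          have := hinj (hj ▸ hj')
          exact absurd (this.2 ▸ (hj0 ▸ rfl : (j : ℕ) = 0) : ((j' : Fin n) : ℕ) = 0)
            (hjk ▸ hk0)
        · rw [if_neg (fun h => hjk h.2)] at hj'
          exact (hinj (hj ▸ hj')).1.symm
    · right
      refine ⟨hj0, ?_⟩
      obtain ⟨j', hj'⟩ := hz j
      by_cases hjj : j' = j
      · rw [if_pos ⟨fun h => hj0 (Fin.ext h), hjj⟩] at hj'
        exact (hinj (hj ▸ hj')).1.symm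
      · rw [if_neg (fun h => hjj h.2)] at hj'
        have := hinj (hj ▸ hj')
        exact absurd this.2.symm hjj
  obtain ⟨j1, hj1⟩ := hx 0
  obtain ⟨j2, hj2⟩ := hy 0
  rw [if_neg (by simp)] at hj1
  rw [if_neg (by simp)] at hj2
  by_cases hj12 : j1 = j2
  · rw [hj1, hj2, hj12]
  rcases aux x hx j1 hj1 with ⟨h10, h1⟩ | ⟨h10, h1⟩ <;>
    rcases aux y hy j2 hj2 with ⟨h20, h2⟩ | ⟨h20, h2⟩
  · exact absurd (h10.trans h20.symm) hj12
  · exact absurd ((h1 j2) ▸ h2) (hσ (ι 0))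
  · exact absurd ((h2 j1) ▸ h1) (hσ (ι 0))
  · -- both j1, j2 ≠ 0, σ (ι j1) = ι 0 = σ (ι j2)
    have hii : ι j1 = ι j2 := σ.injective (h1.trans h2.symm)
    -- x is in the j2-th set
    obtain ⟨j', hj'⟩ := hx j2
    by_cases hjj : j' = j2
    · rw [if_pos ⟨fun h => h20 (Fin.ext h), hjj⟩] at hj'
      have := hinj (hj1 ▸ hj')
      exact absurd (hjj ▸ this.2 : j1 = j2) hj12
    · rw [if_neg (fun h => hjj h.2)] at hj'
      have := hinj (hj1 ▸ hj')
      -- ι 0 = ι j2, so σ (ι 0) = ι 0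
      have : σ (ι 0) = ι 0 := by rw [this.1, h2]; exact this.1
      exact absurd this (hσ (ι 0))
end

section
/- Let 𝕊 and 𝕋 be algebraic theories with binary terms p (in 𝕊) and v (in 𝕋) such that: p is commutative and idempotent; any 𝕊-term provably equal to p(1,2) has at most the free variables {1,2}; v is idempotent; any 𝕋-term provably equal to a variable x has free variables contained in {x}; and any 𝕋-term provably equal to v(1,2) has at least two free variables. Then there exists no composite theory of 𝕊 and 𝕋 (a theory containing both in which every term separates essentially uniquely as a 𝕋-term of 𝕊-terms). -/
/-! ### Algebraic theories, equational logic, and composite theories -/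

structure Signature where
  Op : Type
  ar : Op → Nat

inductive Term (Sg : Signature) (V : Type) : Type
  | var : V → Term Sg V
  | op : (o : Sg.Op) → (Fin (Sg.ar o) → Term Sg V) → Term Sg V

def Term.subst {Sg : Signature} {V W : Type} : Term Sg V → (V → Term Sg W) → Term Sg W
  | .var v, f => f v
  | .op o ts, f => .op o (fun i => (ts i).subst f)

/-- Renaming of variables. -/
def Term.rename {Sg : Signature} {V W : Type} (f : V → W) (t : Term Sg V) : Term Sg W :=
  t.subst (fun v => .var (f v))

/-- The set of free variables of a term. -/
def Term.fv {Sg : Signature} {V : Type} : Term Sg V → Set V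
  | .var v => {v}
  | .op _ ts => ⋃ i, (ts i).fv

/-- An algebraic theory: a signature together with a set of equations (axioms),
given as pairs of terms over the variables ℕ. -/
structure Theory where
  sig : Signature
  Ax : Term sig Nat → Term sig Nat → Prop

/-- Provable equality in equational logic over a theory. -/
inductive Theory.Eq (T : Theory) : {V : Type} → Term T.sig V → Term T.sig V → Prop
  | ax {V : Type} {s t : Term T.sig Nat} (h : T.Ax s t) (f : Nat → Term T.sig V) :
      Theory.Eq T (s.subst f) (t.subst f)
  | refl {V : Type} (t : Term T.sig V) : Theory.Eq T t t
  | symm {V : Type} {s t : Term T.sig V} : Theory.Eq T s t → Theory.Eq T t s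
  | trans {V : Type} {s t u : Term T.sig V} :
      Theory.Eq T s t → Theory.Eq T t u → Theory.Eq T s u
  | congr {V : Type} (o : T.sig.Op) {ts ts' : Fin (T.sig.ar o) → Term T.sig V}
      (h : ∀ i, Theory.Eq T (ts i) (ts' i)) : Theory.Eq T (.op o ts) (.op o ts')
  | subst {V W : Type} {s t : Term T.sig V} (f : V → Term T.sig W) :
      Theory.Eq T s t → Theory.Eq T (s.subst f) (t.subst f)

/-- Disjoint union of two signatures. -/
def Signature.sum (A B : Signature) : Signature := ⟨A.Op ⊕ B.Op, Sum.elim A.ar B.ar⟩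

/-- Embedding of terms of the first theory into the sum signature. -/
def Term.inL {A B : Signature} {V : Type} : Term A V → Term (A.sum B) V
  | .var v => .var v
  | .op o ts => .op (Sum.inl o) (fun i => (ts i).inL)

/-- Embedding of terms of the second theory into the sum signature. -/
def Term.inR {A B : Signature} {V : Type} : Term B V → Term (A.sum B) V
  | .var v => .var v
  | .op o ts => .op (Sum.inr o) (fun i => (ts i).inR)

/-- A closed term, regarded as a term over any variable set. -/
def Term.ofClosed {Sg : Signature} {V : Type} (t : Term Sg Empty) : Term Sg V :=
  t.rename (fun x => x.elim)

/-- A candidate composite theory of `S` and `T`: a theory over the disjoint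
union of the two signatures. -/
structure Composite (S T : Theory) where
  Ax : Term (S.sig.sum T.sig) Nat → Term (S.sig.sum T.sig) Nat → Prop

def Composite.U {S T : Theory} (C : Composite S T) : Theory := ⟨S.sig.sum T.sig, C.Ax⟩

/-- A separated term: a `T`-term with `S`-terms substituted for its variables. -/
def sep {S T : Theory} {V : Type} (t : Term T.sig Nat) (σ : Nat → Term S.sig V) :
    Term (S.sig.sum T.sig) V :=
  (Term.inR (A := S.sig) t).subst (fun n => Term.inL (σ n))

/-- `C` is a composite theory of `S` and `T` in the sense of Pirog–Staton:
it contains both theories, and satisfies separation and essential uniqueness. -/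
structure IsComposite {S T : Theory} (C : Composite S T) : Prop where
  containsS : ∀ {V : Type} (s s' : Term S.sig V), S.Eq s s' → C.U.Eq s.inL s'.inL
  containsT : ∀ {V : Type} (t t' : Term T.sig V), T.Eq t t' → C.U.Eq t.inR t'.inR
  separation : ∀ {V : Type} (u : Term (S.sig.sum T.sig) V),
      ∃ (t : Term T.sig Nat) (σ : Nat → Term S.sig V), C.U.Eq u (sep t σ)
  essUniq : ∀ {V : Type} (t t' : Term T.sig Nat) (σ σ' : Nat → Term S.sig V),
      C.U.Eq (sep t σ) (sep t' σ') →
      ∃ (Z : Type) (f g : Nat → Z),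
        T.Eq (t.rename f) (t'.rename g) ∧
        (∀ i j, f i = f j ↔ S.Eq (σ i) (σ j)) ∧
        (∀ i j, g i = g j ↔ S.Eq (σ' i) (σ' j)) ∧
        (∀ i j, f i = g j ↔ S.Eq (σ i) (σ' j))

/-- Property: any term provably equal to a variable-free term is variable-free. -/
def VarFree0 (T : Theory) : Prop :=
  ∀ (V : Type) (t t' : Term T.sig V), t.fv = ∅ → T.Eq t t' → t'.fv = ∅

/-- Property: any term provably equal to a variable `x` has free variables `⊆ {x}`. -/
def VarSingle (T : Theory) : Prop :=
  ∀ (V : Type) (x : V) (t : Term T.sig V), T.Eq t (.var x) → t.fv ⊆ {x}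

/-- Property: every operation of positive arity has a unit constant. -/
def HasUnits (S : Theory) : Prop :=
  ∀ o : S.sig.Op, 1 ≤ S.sig.ar o →
    ∃ e : Term S.sig Empty, ∀ k : Fin (S.sig.ar o),
      S.Eq (.op o (fun i => if i = k then .var (0 : Nat) else e.ofClosed)) (.var 0)

/-- Application of a term with (at most) free variables `0, 1` to two arguments. -/
def app2 {Sg : Signature} {V : Type} (t : Term Sg Nat) (A B : Term Sg V) : Term Sg V :=
  t.subst (fun n => if n = 0 then A else B)
/-! ### Auxiliary term lemmas -/

theorem Term.subst_subst {Sg : Signature} {V W X : Type} (t : Term Sg V)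
    (f : V → Term Sg W) (g : W → Term Sg X) :
    (t.subst f).subst g = t.subst (fun v => (f v).subst g) := by
  induction t with
  | var v => rfl
  | op o ts ih =>
    simp only [Term.subst]
    congr 1
    funext i
    exact ih i

theorem Term.subst_var' {Sg : Signature} {V : Type} (t : Term Sg V) :
    t.subst (fun v => Term.var v) = t := by
  induction t with
  | var v => rfl
  | op o ts ih =>
    simp only [Term.subst]
    congr 1
    funext i
    exact ih i

theorem Term.mem_fv_subst {Sg : Signature} {V W : Type} {x : W} (t : Term Sg V)
    (f : V → Term Sg W) :
    x ∈ (t.subst f).fv ↔ ∃ v ∈ t.fv, x ∈ (f v).fv := by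
  induction t with
  | var v => simp [Term.subst, Term.fv]
  | op o ts ih =>
    simp only [Term.subst, Term.fv, Set.mem_iUnion, ih]
    constructor
    · rintro ⟨i, v, hv, hx⟩
      exact ⟨v, ⟨i, hv⟩, hx⟩
    · rintro ⟨v, ⟨i, hv⟩, hx⟩
      exact ⟨i, v, hv, hx⟩

theorem Term.subst_congr_fv {Sg : Signature} {V W : Type} {t : Term Sg V}
    {f g : V → Term Sg W} (h : ∀ v ∈ t.fv, f v = g v) : t.subst f = t.subst g := by
  induction t with
  | var v => exact h v rfl
  | op o ts ih =>
    simp only [Term.subst]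
    congr 1
    funext i
    exact ih i (fun v hv => h v (Set.mem_iUnion.2 ⟨i, hv⟩))

theorem Term.subst_rename' {Sg : Signature} {V W X : Type} (t : Term Sg V)
    (f : V → W) (g : W → Term Sg X) :
    (t.rename f).subst g = t.subst (fun v => g (f v)) := by
  unfold Term.rename
  rw [Term.subst_subst]
  rfl

theorem Term.rename_rename {Sg : Signature} {V W X : Type} (t : Term Sg V)
    (f : V → W) (g : W → X) :
    (t.rename f).rename g = t.rename (fun v => g (f v)) :=
  Term.subst_rename' t f _

theorem Term.mem_fv_rename {Sg : Signature} {V W : Type} {x : W} (t : Term Sg V)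
    (f : V → W) : x ∈ (t.rename f).fv ↔ ∃ v ∈ t.fv, f v = x := by
  unfold Term.rename
  rw [Term.mem_fv_subst]
  simp [Term.fv, eq_comm]

theorem Term.rename_id_fv {Sg : Signature} {V : Type} {t : Term Sg V} {f : V → V}
    (h : ∀ v ∈ t.fv, f v = v) : t.rename f = t := by
  unfold Term.rename
  rw [Term.subst_congr_fv (g := fun v => Term.var v) (fun v hv => by rw [h v hv]),
    Term.subst_var']

theorem Term.inL_subst' {A B : Signature} {V W : Type} (s : Term A V)
    (f : V → Term A W) :
    (Term.inL (B := B) (s.subst f)) = (Term.inL s).subst (fun v => Term.inL (f v)) := by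
  induction s with
  | var v => rfl
  | op o ts ih =>
    simp only [Term.subst, Term.inL]
    congr 1
    funext i
    exact ih i

theorem Term.inR_subst' {A B : Signature} {V W : Type} (s : Term B V)
    (f : V → Term B W) :
    (Term.inR (A := A) (s.subst f)) = (Term.inR s).subst (fun v => Term.inR (f v)) := by
  induction s with
  | var v => rfl
  | op o ts ih =>
    simp only [Term.subst, Term.inR]
    congr 1
    funext i
    exact ih i

@[simp] theorem Term.inL_var' {A B : Signature} {V : Type} (x : V) :
    (Term.inL (A := A) (B := B) (Term.var x)) = Term.var x := rfl

@[simp] theorem Term.inR_var' {A B : Signature} {V : Type} (x : V) :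
    (Term.inR (A := A) (B := B) (Term.var x)) = Term.var x := rfl

theorem Term.fv_inL {A B : Signature} {V : Type} (s : Term A V) :
    (Term.inL (B := B) s).fv = s.fv := by
  induction s with
  | var v => rfl
  | op o ts ih =>
    simp only [Term.inL, Term.fv]
    ext x
    simp only [Set.mem_iUnion]
    exact exists_congr fun i => by rw [ih i]

theorem Term.fv_inR {A B : Signature} {V : Type} (s : Term B V) :
    (Term.inR (A := A) s).fv = s.fv := by
  induction s with
  | var v => rfl
  | op o ts ih =>
    simp only [Term.inR, Term.fv]
    ext x
    simp only [Set.mem_iUnion]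
    exact exists_congr fun i => by rw [ih i]

theorem Theory.Eq.substCongr {T : Theory} {V W : Type} (t : Term T.sig V)
    {f g : V → Term T.sig W} (h : ∀ v ∈ t.fv, T.Eq (f v) (g v)) :
    T.Eq (t.subst f) (t.subst g) := by
  induction t with
  | var v => exact h v rfl
  | op o ts ih =>
    exact Theory.Eq.congr o (fun i => ih i (fun v hv => h v (Set.mem_iUnion.2 ⟨i, hv⟩)))

theorem app2_subst {Sg : Signature} {V W : Type} (w : Term Sg ℕ) (a b : Term Sg V)
    (F : V → Term Sg W) :
    (app2 w a b).subst F = app2 w (a.subst F) (b.subst F) := by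
  unfold app2
  rw [Term.subst_subst]
  congr 1
  funext n
  split <;> rfl

theorem Term.inL_app2 {A B : Signature} {V : Type} (w : Term A ℕ) (a b : Term A V) :
    Term.inL (B := B) (app2 w a b) = app2 (Term.inL w) (Term.inL a) (Term.inL b) := by
  unfold app2
  rw [Term.inL_subst']
  congr 1
  funext n
  split <;> rfl

theorem Term.inR_app2 {A B : Signature} {V : Type} (w : Term B ℕ) (a b : Term B V) :
    Term.inR (A := A) (app2 w a b) = app2 (Term.inR w) (Term.inR a) (Term.inR b) := by
  unfold app2
  rw [Term.inR_subst']
  congr 1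
  funext n
  split <;> rfl

theorem app2_eqCongr {T : Theory} {V : Type} (w : Term T.sig ℕ) {a a' b b' : Term T.sig V}
    (h1 : T.Eq a a') (h2 : T.Eq b b') : T.Eq (app2 w a b) (app2 w a' b') :=
  Theory.Eq.substCongr w (fun n _ => by by_cases hn : n = 0 <;> simp [hn] <;> assumption)

theorem sep_rename {S T : Theory} {V W : Type} (t : Term T.sig ℕ)
    (σ : ℕ → Term S.sig V) (χ : V → W) :
    (sep t σ).subst (fun x => Term.var (χ x)) = sep t (fun n => (σ n).rename χ) := by
  unfold sep
  rw [Term.subst_subst]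
  congr 1
  funext n
  unfold Term.rename
  rw [Term.inL_subst']
  simp only [Term.inL_var']

theorem sep_var {S T : Theory} {V : Type} (k : ℕ) (σ : ℕ → Term S.sig V) :
    sep (S := S) (T := T) (Term.var k) σ = Term.inL (σ k) := rfl

theorem Term.rename_def {Sg : Signature} {V W : Type} (t : Term Sg V) (f : V → W) :
    t.rename f = t.subst (fun v => Term.var (f v)) := rfl

/-- **Generalized Plotkin theorem.** If `𝕊` has a commutative idempotent binary term
`p` such that any `𝕊`-term equal to `p` has free variables among `{0,1}`, and `𝕋`
has an idempotent binary term `v` such that terms equal to a variable contain only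
that variable and terms equal to `v` have at least two free variables, then there is
no composite theory of `𝕊` and `𝕋`. -/
theorem no_composite_plotkin (S T : Theory)
    (p : Term S.sig Nat) (hp : p.fv ⊆ {0, 1})
    (v : Term T.sig Nat) (hv : v.fv ⊆ {0, 1})
    (pcomm : S.Eq p (p.subst (fun n => .var (if n = 0 then 1 else if n = 1 then 0 else n))))
    (pidem : S.Eq (p.subst (fun _ => .var (0 : Nat))) (.var 0))
    (pvars : ∀ p' : Term S.sig Nat, S.Eq p p' → p'.fv ⊆ {0, 1})
    (videm : T.Eq (v.subst (fun _ => .var (0 : Nat))) (.var 0))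
    (vvar : ∀ (V : Type) (x : V) (v' : Term T.sig V), T.Eq (.var x) v' → v'.fv ⊆ {x})
    (vbin : ∀ v' : Term T.sig Nat, T.Eq v v' → ¬ ∃ x : Nat, v'.fv ⊆ {x}) :
    ∀ C : Composite S T, ¬ IsComposite C := by
  intro C hC
  classical
  -- ## S-side facts
  have noteq01 : ¬ S.Eq (Term.var 0 : Term S.sig ℕ) (Term.var 1) := by
    intro h
    have h2 := h.subst (fun n => if n = 0 then p else Term.var 2)
    simp only [Term.subst] at h2
    norm_num at h2
    have h3 := pvars _ h2
    have h4 : (2:ℕ) ∈ ({0,1} : Set ℕ) := h3 rfl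
    simp at h4
  have hp1 : (1:ℕ) ∈ p.fv := by
    by_contra h1
    have e1 : p.subst (fun _ => Term.var (0:ℕ)) = p := by
      rw [Term.subst_congr_fv (g := fun x => Term.var x) ?_, Term.subst_var']
      intro x hx
      have hx2 := hp hx
      simp only [Set.mem_insert_iff, Set.mem_singleton_iff] at hx2
      rcases hx2 with h | h
      · rw [h]
      · exact absurd (h ▸ hx) h1
    have hP0 : S.Eq p (Term.var 0) := e1 ▸ pidem
    have hP1 : S.Eq (p.subst (fun n => Term.var (if n = 0 then 1 else if n = 1 then 0 else n)))
        (Term.var 1) := by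
      have h2 := hP0.subst (fun n => Term.var (if n = 0 then 1 else if n = 1 then 0 else n))
      simpa [Term.subst] using h2
    exact noteq01 (hP0.symm.trans (pcomm.trans hP1))
  have hp0 : (0:ℕ) ∈ p.fv := by
    by_contra h0
    have h := pidem.subst (fun _ => (Term.var 1 : Term S.sig ℕ))
    rw [Term.subst_subst] at h
    have e1 : p.subst (fun _ => (Term.var 1 : Term S.sig ℕ)) = p := by
      rw [Term.subst_congr_fv (g := fun x => Term.var x) ?_, Term.subst_var']
      intro x hx
      have hx2 := hp hx
      simp only [Set.mem_insert_iff, Set.mem_singleton_iff] at hx2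
      rcases hx2 with h | h
      · exact absurd (h ▸ hx) h0
      · rw [h]
    have hP1 : S.Eq p (Term.var 1) := by
      have : (fun _ : ℕ => ((Term.var 0 : Term S.sig ℕ).subst fun _ => (Term.var 1 : Term S.sig ℕ))) = (fun _ : ℕ => (Term.var 1 : Term S.sig ℕ)) := rfl
      rw [this, e1] at h
      simpa [Term.subst] using h
    have hP0 : S.Eq (p.subst (fun n => Term.var (if n = 0 then 1 else if n = 1 then 0 else n)))
        (Term.var 0) := by
      have h2 := hP1.subst (fun n => Term.var (if n = 0 then 1 else if n = 1 then 0 else n))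
      simpa [Term.subst] using h2
    exact noteq01 ((hP0.symm.trans (pcomm.symm.trans hP1)))
  have Ssingle : ∀ {V : Type} (x : V) (s : Term S.sig V), S.Eq s (Term.var x) → s.fv ⊆ {x} := by
    intro V x s hEq m hm
    show m = x
    by_contra hmx
    have hER : S.Eq (s.rename (fun v => if v = x then (0:ℕ) else 2)) (Term.var 0) := by
      have h2 := hEq.subst (fun v => Term.var (if v = x then (0:ℕ) else 2))
      simpa [Term.rename, Term.subst] using h2
    have hpF : S.Eq p (p.subst (fun n =>
        if n = 0 then s.rename (fun v => if v = x then (0:ℕ) else 2) else Term.var n)) := by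
      nth_rewrite 1 [← Term.subst_var' p]
      refine Theory.Eq.substCongr p ?_
      intro k hk
      have hk2 := hp hk
      simp only [Set.mem_insert_iff, Set.mem_singleton_iff] at hk2
      rcases hk2 with h | h
      · subst h; simpa using hER.symm
      · subst h; simp; exact Theory.Eq.refl _
    have hsub := pvars _ hpF
    have h2mem : (2:ℕ) ∈ (p.subst (fun n =>
        if n = 0 then s.rename (fun v => if v = x then (0:ℕ) else 2) else Term.var n)).fv := by
      refine (Term.mem_fv_subst _ _).2 ⟨0, hp0, ?_⟩
      simp only [if_pos rfl]
      exact (Term.mem_fv_rename _ _).2 ⟨m, hm, by simp [hmx]⟩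
    have := hsub h2mem
    simp at this
  have varInj : ∀ {V : Type} (a b : V), S.Eq (Term.var a : Term S.sig V) (Term.var b) → a = b :=
    fun a b h => (Ssingle b _ h) rfl
  have pNeVar : ∀ (a b c : ℕ), a ≠ b →
      ¬ S.Eq (app2 p (Term.var a) (Term.var b)) (Term.var c) := by
    intro a b c hab h
    have hsub := Ssingle c _ h
    have ha : a = c := hsub ((Term.mem_fv_subst _ _).2 ⟨0, hp0, by simp [Term.fv]⟩)
    have hb : b = c := hsub ((Term.mem_fv_subst _ _).2 ⟨1, hp1, by simp [Term.fv]⟩)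
    exact hab (ha.trans hb.symm)
  have pidemI : ∀ {V : Type} (c : Term S.sig V), S.Eq (app2 p c c) c := by
    intro V c
    have h := pidem.subst (fun _ => c)
    rw [Term.subst_subst] at h
    have e : app2 p c c = p.subst (fun _ => c) := by
      unfold app2
      congr 1
      funext n
      split <;> rfl
    rw [e]
    exact h
  have pcommI : ∀ {V : Type} (a b : Term S.sig V), S.Eq (app2 p a b) (app2 p b a) := by
    intro V a b
    have h := pcomm.subst (fun n => if n = 0 then a else b)
    rw [Term.subst_subst] at h
    have e : (p.subst (fun n =>
        (Term.var (if n = 0 then 1 else if n = 1 then 0 else n)).subst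
          (fun n => if n = 0 then a else b))) = app2 p b a := by
      unfold app2
      refine Term.subst_congr_fv ?_
      intro k hk
      have hk2 := hp hk
      simp only [Set.mem_insert_iff, Set.mem_singleton_iff] at hk2
      rcases hk2 with h | h <;> subst h <;> simp [Term.subst]
    rw [e] at h
    exact h
  -- ## distinctness of the four p-terms
  have P7a : ¬ S.Eq (app2 p (Term.var 1) (Term.var 2)) (app2 p (Term.var 0) (Term.var 2)) := by
    intro h
    have h2 := h.subst (fun n => Term.var (if n = 1 then 2 else n))
    rw [app2_subst, app2_subst] at h2
    simp only [Term.subst] at h2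
    norm_num at h2
    have h3 := (pidemI _).symm.trans h2
    exact pNeVar 0 2 2 (by norm_num) h3.symm
  have P7b : ¬ S.Eq (app2 p (Term.var 1) (Term.var 2)) (app2 p (Term.var 1) (Term.var 3)) := by
    intro h
    have h2 := h.subst (fun n => Term.var (if n = 1 then 3 else n))
    rw [app2_subst, app2_subst] at h2
    simp only [Term.subst] at h2
    norm_num at h2
    have h3 := h2.trans (pidemI _)
    exact pNeVar 3 2 3 (by norm_num) h3
  -- ## T-side facts
  have hv1 : (1:ℕ) ∈ v.fv := by
    by_contra h1
    refine vbin v (Theory.Eq.refl v) ⟨0, ?_⟩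
    intro x hx
    have hx2 := hv hx
    simp only [Set.mem_insert_iff, Set.mem_singleton_iff] at hx2
    rcases hx2 with h | h
    · exact h
    · exact absurd (h ▸ hx) h1
  have hv0 : (0:ℕ) ∈ v.fv := by
    by_contra h0
    refine vbin v (Theory.Eq.refl v) ⟨1, ?_⟩
    intro x hx
    have hx2 := hv hx
    simp only [Set.mem_insert_iff, Set.mem_singleton_iff] at hx2
    rcases hx2 with h | h
    · exact absurd (h ▸ hx) h0
    · exact h
  have videmI : ∀ {V : Type} (c : Term T.sig V), T.Eq (app2 v c c) c := by
    intro V c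
    have h := videm.subst (fun _ => c)
    rw [Term.subst_subst] at h
    have e : app2 v c c = v.subst (fun _ => c) := by
      unfold app2
      congr 1
      funext n
      split <;> rfl
    rw [e]
    exact h
  have fvBound : ∀ {Z : Type} (w : Term T.sig Z) (g : ℕ → Z), T.Eq w (v.rename g) →
      w.fv ⊆ {g 0, g 1} := by
    intro Z w g hEq
    have h1 := hEq.subst (fun z => Term.var (if z = g 1 then g 0 else z))
    rw [Term.subst_rename'] at h1
    have h2 : v.subst (fun k => Term.var (if g k = g 1 then g 0 else g k)) =
        v.subst (fun _ => Term.var (g 0)) := by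
      refine Term.subst_congr_fv ?_
      intro k hk
      have hk2 := hv hk
      simp only [Set.mem_insert_iff, Set.mem_singleton_iff] at hk2
      rcases hk2 with h | h <;> subst h
      · by_cases hg : g 0 = g 1 <;> simp [hg]
      · simp
    rw [h2] at h1
    have h3 : T.Eq (v.subst (fun _ => Term.var (g 0))) (Term.var (g 0)) := by
      have h := videm.subst (fun _ => (Term.var (g 0) : Term T.sig Z))
      rw [Term.subst_subst] at h
      exact h
    have h5 := vvar Z (g 0) _ (h1.trans h3).symm
    intro m hm
    have h6 : (if m = g 1 then g 0 else m) ∈ ({g 0} : Set Z) := by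
      refine h5 ((Term.mem_fv_subst _ _).2 ⟨m, hm, ?_⟩)
      rfl
    simp only [Set.mem_singleton_iff] at h6
    by_cases hm1 : m = g 1
    · exact Set.mem_insert_iff.2 (Or.inr hm1)
    · rw [if_neg hm1] at h6
      exact Set.mem_insert_iff.2 (Or.inl h6)
  -- ## U-level operations
  have pidemA : ∀ (c : Term (S.sig.sum T.sig) ℕ), C.U.Eq (app2 (Term.inL p) c c) c := by
    intro c
    have h0 := hC.containsS _ _ pidem
    rw [Term.inL_subst'] at h0
    simp only [Term.inL_var'] at h0
    have h := h0.subst (fun _ => c)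
    erw [Term.subst_subst] at h
    have e : app2 (Term.inL p) c c = (Term.inL p).subst (fun _ => c) := by
      unfold app2
      congr 1
      funext n
      split <;> rfl
    erw [e]
    exact h
  have videmA : ∀ (c : Term (S.sig.sum T.sig) ℕ), C.U.Eq (app2 (Term.inR v) c c) c := by
    intro c
    have h0 := hC.containsT _ _ videm
    rw [Term.inR_subst'] at h0
    simp only [Term.inR_var'] at h0
    have h := h0.subst (fun _ => c)
    erw [Term.subst_subst] at h
    have e : app2 (Term.inR v) c c = (Term.inR v).subst (fun _ => c) := by
      unfold app2
      congr 1
      funext n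
      split <;> rfl
    erw [e]
    exact h
  have pcommA : ∀ (a b : Term (S.sig.sum T.sig) ℕ),
      C.U.Eq (app2 (Term.inL p) a b) (app2 (Term.inL p) b a) := by
    intro a b
    have h0 := hC.containsS _ _ pcomm
    rw [Term.inL_subst'] at h0
    simp only [Term.inL_var'] at h0
    have h := h0.subst (fun n => if n = 0 then a else b)
    erw [Term.subst_subst] at h
    have e : ((Term.inL p : Term (S.sig.sum T.sig) ℕ).subst (fun n =>
        (Term.var (if n = 0 then 1 else if n = 1 then 0 else n)).subst
          (fun n => if n = 0 then a else b))) = app2 (Term.inL p) b a := by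
      unfold app2
      refine Term.subst_congr_fv ?_
      intro k hk
      rw [Term.fv_inL] at hk
      have hk2 := hp hk
      simp only [Set.mem_insert_iff, Set.mem_singleton_iff] at hk2
      rcases hk2 with h | h <;> subst h <;> simp [Term.subst]
    erw [e] at h
    exact h
  -- ## the main term and its separation
  set u : Term (S.sig.sum T.sig) ℕ := app2 (Term.inL p)
      (app2 (Term.inR v) (Term.var 0) (Term.var 1))
      (app2 (Term.inR v) (Term.var 2) (Term.var 3)) with hu
  obtain ⟨t, σ, hsep⟩ := hC.separation u
  set rb : ℕ → ℕ := fun n => if n = 2 then 0 else if n = 3 then 1 else n with hrb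
  set ra : ℕ → ℕ := fun n => if n = 1 then 0 else if n = 3 then 2 else n with hra
  -- Step A : collapse z ↦ x, w ↦ y
  have hArb : u.subst (fun n => Term.var (rb n)) =
      app2 (Term.inL p) (app2 (Term.inR v) (Term.var 0) (Term.var 1))
        (app2 (Term.inR v) (Term.var 0) (Term.var 1)) := by
    rw [hu, app2_subst, app2_subst, app2_subst]
    simp only [Term.subst]
    norm_num [hrb]
  have hXv : app2 (Term.inR v) (Term.var 0) (Term.var 1) = (Term.inR v : Term (S.sig.sum T.sig) ℕ) := by
    unfold app2
    rw [Term.subst_congr_fv (g := fun n => Term.var n) ?_, Term.subst_var']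
    intro k hk
    rw [Term.fv_inR] at hk
    have hk2 := hv hk
    simp only [Set.mem_insert_iff, Set.mem_singleton_iff] at hk2
    rcases hk2 with h | h <;> subst h <;> simp
  have hsepv : sep (S := S) v (fun n => Term.var n) = Term.inR v := by
    unfold sep
    simp only [Term.inL_var']
    exact Term.subst_var' _
  have hA : C.U.Eq (sep t (fun k => (σ k).rename rb)) (sep (S := S) v (fun n => Term.var n)) := by
    have h1 := hsep.subst (fun n => Term.var (rb n))
    erw [sep_rename, hArb, hXv] at h1
    have h2 : C.U.Eq (app2 (Term.inL p) (Term.inR v) (Term.inR v)) (Term.inR v) :=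
      pidemA (Term.inR v)
    rw [hsepv]
    exact h1.symm.trans h2
  obtain ⟨Z, f, g, hTfg, hff, hgg, hfg⟩ := hC.essUniq t v _ _ hA
  have hg01 : g 0 ≠ g 1 := fun h => noteq01 ((hgg 0 1).1 h)
  have hmem : ∀ i ∈ t.fv, f i = g 0 ∨ f i = g 1 := by
    intro i hi
    have h1 := fvBound (t.rename f) g hTfg ((Term.mem_fv_rename _ _).2 ⟨i, hi, rfl⟩)
    simpa [Set.mem_insert_iff, Set.mem_singleton_iff] using h1
  set hm : Z → ℕ := fun z => if z = g 0 then 0 else if z = g 1 then 1 else 0 with hhm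
  have hT2 : T.Eq (t.rename (fun k => hm (f k))) v := by
    have h5 := hTfg.subst (fun z => Term.var (hm z))
    rw [Term.subst_rename', Term.subst_rename'] at h5
    have e : v.subst (fun k => Term.var (hm (g k))) = v := by
      rw [Term.subst_congr_fv (g := fun k => Term.var k) ?_, Term.subst_var']
      intro k hk
      have hk2 := hv hk
      simp only [Set.mem_insert_iff, Set.mem_singleton_iff] at hk2
      rcases hk2 with h | h <;> subst h
      · simp [hhm]
      · simp [hhm, Ne.symm hg01]
    rw [e] at h5
    exact h5
  have hX : ∃ i ∈ t.fv, f i = g 0 := by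
    by_contra hno
    push_neg at hno
    refine vbin _ hT2.symm ⟨1, ?_⟩
    intro x hx
    obtain ⟨k, hk, hfk⟩ := (Term.mem_fv_rename _ _).1 hx
    rcases hmem k hk with hc | hc
    · exact absurd hc (hno k hk)
    · show x = 1
      rw [← hfk, hc]
      simp [hhm, Ne.symm hg01]
  have hY : ∃ j ∈ t.fv, f j = g 1 := by
    by_contra hno
    push_neg at hno
    refine vbin _ hT2.symm ⟨0, ?_⟩
    intro x hx
    obtain ⟨k, hk, hfk⟩ := (Term.mem_fv_rename _ _).1 hx
    rcases hmem k hk with hc | hc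
    · show x = 0
      rw [← hfk, hc]
      simp [hhm]
    · exact absurd hc (hno k hk)
  -- Step B : collapse y ↦ x, w ↦ z
  have hBrb : u.subst (fun n => Term.var (ra n)) =
      app2 (Term.inL p) (app2 (Term.inR v) (Term.var 0) (Term.var 0))
        (app2 (Term.inR v) (Term.var 2) (Term.var 2)) := by
    rw [hu, app2_subst, app2_subst, app2_subst]
    simp only [Term.subst]
    norm_num [hra]
  have hILapp : ∀ (a b : ℕ), (Term.inL (app2 p (Term.var a) (Term.var b)) : Term (S.sig.sum T.sig) ℕ) =
      app2 (Term.inL p) (Term.var a) (Term.var b) := by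
    intro a b
    rw [Term.inL_app2]
    simp only [Term.inL_var']
  have hB : C.U.Eq (sep t (fun k => (σ k).rename ra))
      (sep (S := S) (T := T) (Term.var 0)
        (fun _ => app2 p (Term.var 0) (Term.var 2))) := by
    have h1 := hsep.subst (fun n => Term.var (ra n))
    erw [sep_rename, hBrb] at h1
    have h2 : C.U.Eq (app2 (Term.inL p) (app2 (Term.inR v) (Term.var 0) (Term.var 0))
        (app2 (Term.inR v) (Term.var 2) (Term.var 2)))
        (app2 (Term.inL p) (Term.var 0) (Term.var 2)) :=
      app2_eqCongr _ (videmA _) (videmA _)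
    show C.U.Eq (sep t fun k => (σ k).rename ra)
      (Term.inL (app2 p (Term.var 0) (Term.var 2)))
    rw [hILapp]
    exact h1.symm.trans h2
  obtain ⟨Z', f', g', hT', hff', hgg', hfg'⟩ := hC.essUniq t (Term.var 0) _ _ hB
  have hfv' : (t.rename f').fv ⊆ {g' 0} := vvar Z' (g' 0) _ hT'.symm
  have hSa : ∀ k ∈ t.fv, S.Eq ((σ k).rename ra) (app2 p (Term.var 0) (Term.var 2)) := by
    intro k hk
    have h1 : f' k = g' 0 := hfv' ((Term.mem_fv_rename _ _).2 ⟨k, hk, rfl⟩)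
    have h2 := (hfg' k 0).1 h1
    simpa using h2
  -- Step C : pin down the σ values
  have hCX : ∀ i ∈ t.fv, f i = g 0 → S.Eq (σ i) (app2 p (Term.var 0) (Term.var 2)) := by
    intro i hi hfi
    have h1 : S.Eq ((σ i).rename rb) (Term.var 0) := by
      have := (hfg i 0).1 hfi
      simpa using this
    have h2 := Ssingle _ _ h1
    have hfvs : ∀ k ∈ (σ i).fv, rb k = 0 := by
      intro k hk
      exact h2 ((Term.mem_fv_rename _ _).2 ⟨k, hk, rfl⟩)
    have h3 : (σ i).rename ra = σ i := by
      refine Term.rename_id_fv ?_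
      intro k hk
      have h4 := hfvs k hk
      by_cases hk2 : k = 2
      · simp [hra, hk2]
      · by_cases hk3 : k = 3
        · simp [hrb, hk2, hk3] at h4
        · simp [hrb, hk2, hk3] at h4
          simp [hra, h4]
    rw [← h3]
    exact hSa i hi
  have hCY : ∀ j ∈ t.fv, f j = g 1 → S.Eq (σ j) (app2 p (Term.var 1) (Term.var 3)) := by
    intro j hj hfj
    have h1 : S.Eq ((σ j).rename rb) (Term.var 1) := by
      have := (hfg j 1).1 hfj
      simpa using this
    have h2 := Ssingle _ _ h1
    have hfvs : ∀ k ∈ (σ j).fv, rb k = 1 :=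
      fun k hk => h2 ((Term.mem_fv_rename _ _).2 ⟨k, hk, rfl⟩)
    have hmem13 : ∀ k ∈ (σ j).fv, k = 1 ∨ k = 3 := by
      intro k hk
      have h4 := hfvs k hk
      by_cases hk2 : k = 2
      · simp [hrb, hk2] at h4
      · by_cases hk3 : k = 3
        · right; exact hk3
        · left; simpa [hrb, hk2, hk3] using h4
    set e : ℕ → ℕ := fun n => if n = 0 then 1 else if n = 2 then 3 else n with he
    have h5 : ((σ j).rename ra).subst (fun n => Term.var (e n)) = σ j := by
      rw [← Term.rename_def, Term.rename_rename]
      refine Term.rename_id_fv ?_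
      intro k hk
      rcases hmem13 k hk with h | h <;> subst h <;> simp [hra, he]
    have h6 := (hSa j hj).subst (fun n => Term.var (e n))
    rw [app2_subst, h5] at h6
    simp only [Term.subst] at h6
    norm_num [he] at h6
    exact h6
  -- Step D : u is U-equal to v applied to two S-terms
  set al : Term S.sig ℕ := app2 p (Term.var 0) (Term.var 2) with hal
  set de : Term S.sig ℕ := app2 p (Term.var 1) (Term.var 3) with hde
  set th : ℕ → Term S.sig ℕ := fun n => if n = 0 then al else de with hth
  have hpt : ∀ k ∈ t.fv, S.Eq (σ k) (th (hm (f k))) := by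
    intro k hk
    rcases hmem k hk with hc | hc
    · rw [hc]
      have e : hm (g 0) = 0 := by simp [hhm]
      rw [e]
      simpa [hth] using hCX k hk hc
    · rw [hc]
      have e : hm (g 1) = 1 := by simp [hhm, Ne.symm hg01]
      rw [e]
      simpa [hth] using hCY k hk hc
  have hD1 : C.U.Eq (sep t σ) (sep t (fun k => th (hm (f k)))) := by
    refine Theory.Eq.substCongr (T := C.U) (Term.inR t : Term (S.sig.sum T.sig) ℕ) ?_
    intro k hk
    erw [Term.fv_inR] at hk
    exact hC.containsS _ _ (hpt k hk)
  have hD2 : sep (t.rename (fun k => hm (f k))) th = sep t (fun k => th (hm (f k))) := by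
    unfold sep
    rw [Term.rename_def, Term.inR_subst', Term.subst_subst]
    rfl
  have hD3 : C.U.Eq (sep (t.rename (fun k => hm (f k))) th) (sep (S := S) v th) := by
    unfold sep
    exact (hC.containsT _ _ hT2).subst (fun n => (Term.inL (th n) : Term (S.sig.sum T.sig) ℕ))
  have hsepvth : sep (S := S) v th = app2 (Term.inR v) (Term.inL al) (Term.inL de) := by
    unfold sep app2
    congr 1
    funext n
    by_cases hn : n = 0 <;> simp [hth, hn]
  have hmain : C.U.Eq u (app2 (Term.inR v) (Term.inL al) (Term.inL de)) := by
    erw [← hsepvth]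
    have h1 := hsep.trans hD1
    rw [← hD2] at h1
    exact h1.trans hD3
  have hmain' : C.U.Eq u (app2 (Term.inR v)
      (app2 (Term.inL p) (Term.var 0) (Term.var 2))
      (app2 (Term.inL p) (Term.var 1) (Term.var 3))) := by
    erw [← hILapp, ← hILapp, ← hal, ← hde]
    exact hmain
  -- Step E : the "multiplication" identity  p(x, v(z,w)) = v(p(x,z), p(x,w))
  have hMid : C.U.Eq (app2 (Term.inL p) (Term.var 0) (app2 (Term.inR v) (Term.var 2) (Term.var 3)))
      (app2 (Term.inR v) (app2 (Term.inL p) (Term.var 0) (Term.var 2))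
        (app2 (Term.inL p) (Term.var 0) (Term.var 3))) := by
    have h1 := hmain'.subst (fun n => Term.var (if n = 1 then (0:ℕ) else n))
    rw [hu] at h1
    simp only [Composite.U, app2_subst, Term.subst] at h1
    norm_num at h1
    exact (app2_eqCongr _ (videmA (Term.var 0)) (Theory.Eq.refl _)).symm.trans h1
  have hMidG : ∀ (F : ℕ → Term (S.sig.sum T.sig) ℕ),
      C.U.Eq (app2 (Term.inL p) (F 0) (app2 (Term.inR v) (F 2) (F 3)))
        (app2 (Term.inR v) (app2 (Term.inL p) (F 0) (F 2)) (app2 (Term.inL p) (F 0) (F 3))) := by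
    intro F
    have h1 := hMid.subst F
    simp only [Composite.U, app2_subst, Term.subst] at h1
    exact h1
  -- Step F : decompose u a second way
  have hF1 : C.U.Eq u (app2 (Term.inR v)
      (app2 (Term.inL p) (app2 (Term.inR v) (Term.var 0) (Term.var 1)) (Term.var 2))
      (app2 (Term.inL p) (app2 (Term.inR v) (Term.var 0) (Term.var 1)) (Term.var 3))) := by
    have h1 := hMidG (fun n => if n = 0 then app2 (Term.inR v) (Term.var 0) (Term.var 1) else Term.var n)
    norm_num at h1
    rw [hu]
    exact h1
  have hG1 : C.U.Eq (app2 (Term.inL p) (app2 (Term.inR v) (Term.var 0) (Term.var 1)) (Term.var 2))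
      (app2 (Term.inR v) (app2 (Term.inL p) (Term.var 0) (Term.var 2))
        (app2 (Term.inL p) (Term.var 1) (Term.var 2))) := by
    have h1 := pcommA (app2 (Term.inR v) (Term.var 0) (Term.var 1)) (Term.var 2)
    have h2 := hMidG (fun n => if n = 0 then Term.var 2 else if n = 2 then Term.var 0
      else if n = 3 then Term.var 1 else Term.var n)
    norm_num at h2
    exact (h1.trans h2).trans (app2_eqCongr _ (pcommA _ _) (pcommA _ _))
  have hG2 : C.U.Eq (app2 (Term.inL p) (app2 (Term.inR v) (Term.var 0) (Term.var 1)) (Term.var 3))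
      (app2 (Term.inR v) (app2 (Term.inL p) (Term.var 0) (Term.var 3))
        (app2 (Term.inL p) (Term.var 1) (Term.var 3))) := by
    have h1 := pcommA (app2 (Term.inR v) (Term.var 0) (Term.var 1)) (Term.var 3)
    have h2 := hMidG (fun n => if n = 0 then Term.var 3 else if n = 2 then Term.var 0
      else if n = 3 then Term.var 1 else Term.var n)
    norm_num at h2
    exact (h1.trans h2).trans (app2_eqCongr _ (pcommA _ _) (pcommA _ _))
  have hRHS1 : C.U.Eq u (app2 (Term.inR v)
      (app2 (Term.inR v) (app2 (Term.inL p) (Term.var 0) (Term.var 2))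
        (app2 (Term.inL p) (Term.var 1) (Term.var 2)))
      (app2 (Term.inR v) (app2 (Term.inL p) (Term.var 0) (Term.var 3))
        (app2 (Term.inL p) (Term.var 1) (Term.var 3)))) :=
    hF1.trans (app2_eqCongr _ hG1 hG2)
  -- Step G : the clash between the two decompositions
  set t1 : Term T.sig ℕ := app2 v (app2 v (Term.var 0) (Term.var 1)) (app2 v (Term.var 2) (Term.var 3)) with ht1
  set ta : ℕ → Term S.sig ℕ := fun n => if n = 0 then app2 p (Term.var 0) (Term.var 2)
      else if n = 1 then app2 p (Term.var 1) (Term.var 2)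
      else if n = 2 then app2 p (Term.var 0) (Term.var 3)
      else app2 p (Term.var 1) (Term.var 3) with hta
  have hsep1 : sep t1 ta = app2 (Term.inR v)
      (app2 (Term.inR v) (app2 (Term.inL p) (Term.var 0) (Term.var 2))
        (app2 (Term.inL p) (Term.var 1) (Term.var 2)))
      (app2 (Term.inR v) (app2 (Term.inL p) (Term.var 0) (Term.var 3))
        (app2 (Term.inL p) (Term.var 1) (Term.var 3))) := by
    unfold sep
    rw [ht1, hta]
    rw [Term.inR_app2, Term.inR_app2, Term.inR_app2]
    simp only [Term.inR_var']
    simp only [app2_subst, Term.subst]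
    norm_num
    simp only [hILapp]
  have hfinal : C.U.Eq (sep t1 ta) (sep (S := S) v th) := by
    rw [hsep1, hsepvth, hal, hde, hILapp, hILapp]
    exact hRHS1.symm.trans hmain'
  obtain ⟨Z'', F, G, hT3, hFF3, hGG3, hFG3⟩ := hC.essUniq t1 v ta th hfinal
  have h1t1 : (1:ℕ) ∈ t1.fv := by
    rw [ht1]
    refine (Term.mem_fv_subst _ _).2 ⟨0, hv0, ?_⟩
    norm_num
    exact (Term.mem_fv_subst _ _).2 ⟨1, hv1, by norm_num [Term.fv]⟩
  have hF1mem := fvBound (t1.rename F) G hT3 ((Term.mem_fv_rename _ _).2 ⟨1, h1t1, rfl⟩)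
  simp only [Set.mem_insert_iff, Set.mem_singleton_iff] at hF1mem
  rcases hF1mem with h | h
  · exact P7a (by simpa [hta, hth, hal] using (hFG3 1 0).1 h)
  · exact P7b (by simpa [hta, hth, hde] using (hFG3 1 1).1 h)
end

section
/- Let 𝕊 and 𝕋 be algebraic theories satisfying: (for 𝕊) terms equal to variable-free terms are variable-free; terms equal to a variable x have free variables ⊆ {x}; every positive-arity operation has a unit constant; and there is a binary term ⋄ with two-sided unit e_⋄. (For 𝕋) the same two variable conditions; a constant e_◦; and a binary term ◦ with two-sided unit e_◦. Then in any composite theory 𝕌 of 𝕊 and 𝕋, ⋄ distributes over ◦: ⋄(◦(y₁,y₂), x₀) =_𝕌 ◦(⋄(y₁,x₀), ⋄(y₂,x₀)) and ⋄(x₀, ◦(y₁,y₂)) =_𝕌 ◦(⋄(x₀,y₁), ⋄(x₀,y₂)). -/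
attribute [reducible] Composite.U
attribute [reducible] Signature.sum

namespace TP

open Term

variable {Sg : Signature} {V W X : Type}

theorem subst_subst (t : Term Sg V) (f : V → Term Sg W) (g : W → Term Sg X) :
    (t.subst f).subst g = t.subst (fun v => (f v).subst g) := by
  induction t with
  | var v => rfl
  | op o ts ih => simp only [Term.subst]; exact congrArg _ (funext fun i => ih i)

theorem subst_var (t : Term Sg V) : t.subst Term.var = t := by
  induction t with
  | var v => rfl
  | op o ts ih => simp only [Term.subst]; exact congrArg _ (funext fun i => ih i)

theorem subst_eq_on_fv {t : Term Sg V} {f g : V → Term Sg W}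
    (h : ∀ v ∈ t.fv, f v = g v) : t.subst f = t.subst g := by
  induction t with
  | var v => exact h v (by simp [Term.fv])
  | op o ts ih =>
      simp only [Term.subst]
      refine congrArg _ (funext fun i => ih i fun v hv => h v ?_)
      exact Set.mem_iUnion.2 ⟨i, hv⟩

theorem mem_fv_subst {t : Term Sg V} {f : V → Term Sg W} {v : V} {w : W}
    (hv : v ∈ t.fv) (hw : w ∈ (f v).fv) : w ∈ (t.subst f).fv := by
  induction t with
  | var x =>
      simp only [Term.fv, Set.mem_singleton_iff] at hv
      subst hv; exact hw
  | op o ts ih =>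
      simp only [Term.subst, Term.fv, Set.mem_iUnion] at hv ⊢
      obtain ⟨i, hi⟩ := hv
      exact ⟨i, ih i hi⟩

theorem fv_subst_sub {t : Term Sg V} {f : V → Term Sg W} {w : W}
    (hw : w ∈ (t.subst f).fv) : ∃ v ∈ t.fv, w ∈ (f v).fv := by
  induction t with
  | var x => exact ⟨x, by simp [Term.fv], hw⟩
  | op o ts ih =>
      simp only [Term.subst, Term.fv, Set.mem_iUnion] at hw
      obtain ⟨i, hi⟩ := hw
      obtain ⟨v, hv, hw'⟩ := ih i hi
      exact ⟨v, by simp only [Term.fv, Set.mem_iUnion]; exact ⟨i, hv⟩, hw'⟩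

theorem ofClosed_op {o : Sg.Op} {ts : Fin (Sg.ar o) → Term Sg Empty} :
    (Term.ofClosed (.op o ts) : Term Sg V) = .op o (fun i => Term.ofClosed (ts i)) := rfl

theorem ofClosed_subst (t : Term Sg Empty) (f : V → Term Sg W) :
    (Term.ofClosed t : Term Sg V).subst f = Term.ofClosed t := by
  induction t with
  | var v => exact v.elim
  | op o ts ih =>
      simp only [ofClosed_op, Term.subst]
      exact congrArg _ (funext fun i => ih i)

theorem ofClosed_rename (t : Term Sg Empty) (f : V → W) :
    (Term.ofClosed t : Term Sg V).rename f = Term.ofClosed t :=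
  ofClosed_subst t _

theorem fv_ofClosed (t : Term Sg Empty) : (Term.ofClosed t : Term Sg V).fv = ∅ := by
  rw [Set.eq_empty_iff_forall_notMem]
  intro w hw
  obtain ⟨v, -, -⟩ := fv_subst_sub hw
  exact v.elim

theorem exists_ofClosed {t : Term Sg V} (h : t.fv = ∅) :
    ∃ t₀ : Term Sg Empty, t = Term.ofClosed t₀ := by
  induction t with
  | var v => simp [Term.fv, Set.eq_empty_iff_forall_notMem] at h
  | op o ts ih =>
      simp only [Term.fv, Set.iUnion_eq_empty] at h
      choose t₀ ht₀ using fun i => ih i (h i)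
      exact ⟨.op o t₀, by rw [ofClosed_op]; exact congrArg _ (funext ht₀)⟩

end TP
namespace TP

variable {A B : Signature} {V W X : Type}

theorem inL_subst (t : Term A V) (f : V → Term A W) :
    (t.subst f).inL (B := B) = t.inL.subst (fun v => (f v).inL) := by
  induction t with
  | var v => rfl
  | op o ts ih => simp only [Term.subst, Term.inL]; exact congrArg _ (funext fun i => ih i)

theorem inR_subst (t : Term B V) (f : V → Term B W) :
    (t.subst f).inR (A := A) = t.inR.subst (fun v => (f v).inR) := by
  induction t with
  | var v => rfl
  | op o ts ih => simp only [Term.subst, Term.inR]; exact congrArg _ (funext fun i => ih i)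

theorem fv_inL (t : Term A V) : (t.inL (B := B)).fv = t.fv := by
  induction t with
  | var v => rfl
  | op o ts ih => simp only [Term.inL, Term.fv]; exact congrArg _ (funext fun i => ih i)

theorem fv_inR (t : Term B V) : (t.inR (A := A)).fv = t.fv := by
  induction t with
  | var v => rfl
  | op o ts ih => simp only [Term.inR, Term.fv]; exact congrArg _ (funext fun i => ih i)

theorem inL_ofClosed (t : Term A Empty) :
    (Term.ofClosed t : Term A V).inL (B := B) = Term.ofClosed t.inL := by
  induction t with
  | var v => exact v.elim
  | op o ts ih =>
      simp only [ofClosed_op, Term.inL]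
      exact congrArg _ (funext fun i => ih i)

theorem inR_ofClosed (t : Term B Empty) :
    (Term.ofClosed t : Term B V).inR (A := A) = Term.ofClosed t.inR := by
  induction t with
  | var v => exact v.elim
  | op o ts ih =>
      simp only [ofClosed_op, Term.inR]
      exact congrArg _ (funext fun i => ih i)

theorem eq_subst_congr {U : Theory} {t : Term U.sig V} {f g : V → Term U.sig W}
    (h : ∀ v ∈ t.fv, U.Eq (f v) (g v)) : U.Eq (t.subst f) (t.subst g) := by
  induction t with
  | var v => exact h v (by simp [Term.fv])
  | op o ts ih =>
      exact Theory.Eq.congr o fun i => ih i fun v hv =>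
        h v (by simp only [Term.fv, Set.mem_iUnion]; exact ⟨i, hv⟩)

theorem app2_subst {Sg : Signature} (t : Term Sg Nat) (a b : Term Sg V) (f : V → Term Sg W) :
    (app2 t a b).subst f = app2 t (a.subst f) (b.subst f) := by
  rw [app2, app2, subst_subst]
  exact subst_eq_on_fv fun v _ => by by_cases h : v = 0 <;> simp [h]

theorem inL_app2 (t : Term A Nat) (a b : Term A V) :
    (app2 t a b).inL (B := B) = app2 t.inL a.inL b.inL := by
  rw [app2, app2, inL_subst]
  exact subst_eq_on_fv fun v _ => by by_cases h : v = 0 <;> simp [h]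

theorem inR_app2 (t : Term B Nat) (a b : Term B V) :
    (app2 t a b).inR (A := A) = app2 t.inR a.inR b.inR := by
  rw [app2, app2, inR_subst]
  exact subst_eq_on_fv fun v _ => by by_cases h : v = 0 <;> simp [h]

section Sep

variable {S T : Theory}

theorem sep_def (t : Term T.sig Nat) (σ : Nat → Term S.sig V) :
    sep t σ = (Term.inR (A := S.sig) t).subst (fun n => Term.inL (σ n)) := rfl

theorem sep_subst_S (t : Term T.sig Nat) (σ : Nat → Term S.sig V) (τ : V → Term S.sig W) :
    (sep t σ).subst (fun v => Term.inL (τ v)) = sep t (fun n => (σ n).subst τ) := by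
  rw [sep_def, sep_def, subst_subst]
  exact congrArg _ (funext fun n => (inL_subst _ _).symm)

theorem sep_var (n : Nat) (σ : Nat → Term S.sig V) :
    sep (S := S) (T := T) (Term.var n) σ = Term.inL (σ n) := rfl

theorem sep_rename (t : Term T.sig Nat) (r : Nat → Nat) (χ : Nat → Term S.sig V) :
    sep (t.rename r) χ = sep t (fun n => χ (r n)) := by
  rw [sep_def, sep_def, Term.rename, inR_subst, subst_subst]
  rfl

theorem sep_ofClosed (t : Term T.sig Empty) (σ : Nat → Term S.sig V) :
    sep (Term.ofClosed t) σ = Term.ofClosed (Term.inR (A := S.sig) t) := by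
  rw [sep_def, inR_ofClosed, ofClosed_subst]

end Sep

end TP
namespace TP

variable {S T : Theory}

/-- The unit of `T` as a closed term of the sum signature, over any variable set. -/
def eBar (S : Theory) (eT : Term T.sig Empty) : Term (S.sig.sum T.sig) V :=
  Term.ofClosed (Term.inR (A := S.sig) eT)

theorem eBar_subst (eT : Term T.sig Empty) (f : V → Term (S.sig.sum T.sig) W) :
    (eBar S eT : Term _ V).subst f = eBar S eT := ofClosed_subst _ _

theorem fv_eBar (eT : Term T.sig Empty) : (eBar S eT : Term _ V).fv = ∅ := fv_ofClosed _

theorem annih_op {C : Composite S T} (hC : IsComposite C)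
    (hSu : HasUnits S) (hT0 : VarFree0 T) (eT : Term T.sig Empty)
    (o : S.sig.Op) (k : Fin (S.sig.ar o))
    (X : Fin (S.sig.ar o) → Term (S.sig.sum T.sig) V) (hk : X k = eBar S eT) :
    C.U.Eq (.op (Sum.inl o) X) (eBar S eT) := by
  classical
  obtain ⟨e, he⟩ := hSu o (Nat.succ_le_of_lt k.pos)
  set eb : Term (S.sig.sum T.sig) Nat := eBar S eT with heb
  set A : Term (S.sig.sum T.sig) Nat :=
    .op (Sum.inl o) (fun i => if i = k then eb else .var i.val) with hA
  have hAe : C.U.Eq A (eBar S eT) := by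
    obtain ⟨t', σ', hsep⟩ := hC.separation A
    -- substitute the unit of o for all variables
    have h2 : C.U.Eq ((Term.inL (B := T.sig)
        (.op o (fun i => if i = k then .var (0:Nat) else e.ofClosed))).subst
          (fun _ => eb)) ((Term.var (0:Nat) : Term (S.sig.sum T.sig) Nat).subst (fun _ => eb)) :=
      Theory.Eq.subst _ (hC.containsS _ _ (he k))
    have hL : (Term.inL (B := T.sig)
        (.op o (fun i => if i = k then .var (0:Nat) else e.ofClosed))).subst
          (fun _ => eb) = A.subst (fun _ => Term.ofClosed (Term.inL (B := T.sig) e)) := by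
      simp only [Term.inL, Term.subst, hA]
      refine congrArg _ (funext fun i => ?_)
      by_cases hik : i = k
      · simp [hik, heb, eBar_subst, Term.inL, Term.subst]
      · erw [if_neg hik, if_neg hik]; simp [inL_ofClosed, ofClosed_subst, Term.subst]
    have h3 : C.U.Eq (A.subst (fun _ => Term.ofClosed (Term.inL (B := T.sig) e))) eb := by
      rw [← hL]; exact h2
    have h4 : C.U.Eq (sep t' (fun n => (σ' n).subst (fun _ => Term.ofClosed e)))
        (sep (Term.ofClosed eT) (fun _ => Term.var 0)) := by
      rw [sep_ofClosed]
      have hsub : (sep t' σ').subst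
          (fun _ : Nat => (Term.ofClosed (Term.inL (B := T.sig) e) : Term (S.sig.sum T.sig) Nat)) =
          sep t' (fun n => (σ' n).subst fun _ => Term.ofClosed e) := by
        have hfe : (fun _ : Nat =>
            (Term.ofClosed (Term.inL (B := T.sig) e) : Term (S.sig.sum T.sig) Nat)) =
            fun v : Nat => Term.inL ((fun _ : Nat => (Term.ofClosed e : Term S.sig Nat)) v) :=
          funext fun _ => (inL_ofClosed e).symm
        rw [hfe, sep_subst_S]
      have hstep := Theory.Eq.subst
        (fun _ : Nat => (Term.ofClosed (Term.inL (B := T.sig) e) : Term (S.sig.sum T.sig) Nat)) hsep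
      rw [hsub] at hstep
      exact hstep.symm.trans h3
    obtain ⟨Z, f, g, hfg, -, -, -⟩ := hC.essUniq _ _ _ _ h4
    rw [ofClosed_rename] at hfg
    have hclosed : (t'.rename f).fv = ∅ :=
      hT0 _ _ _ (fv_ofClosed _) (Theory.Eq.symm hfg)
    have ht'closed : t'.fv = ∅ := by
      rw [Set.eq_empty_iff_forall_notMem]
      intro v hv
      have : f v ∈ (t'.rename f).fv := mem_fv_subst hv (by simp [Term.fv])
      rw [hclosed] at this
      exact this
    obtain ⟨t₀, rfl⟩ := exists_ofClosed ht'closed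
    rw [ofClosed_rename] at hfg
    have h5 : T.Eq (Term.ofClosed t₀ : Term T.sig Nat) (Term.ofClosed eT) := by
      have := Theory.Eq.subst (fun _ : Z => (Term.var 0 : Term T.sig Nat)) hfg
      rwa [ofClosed_subst, ofClosed_subst] at this
    have h6 : C.U.Eq (sep (Term.ofClosed t₀) σ') (eBar S eT) := by
      rw [sep_ofClosed]
      have := hC.containsT _ _ h5
      rw [inR_ofClosed, inR_ofClosed] at this
      exact this
    exact hsep.trans h6
  have final := Theory.Eq.subst
    (fun n => if h : n < S.sig.ar o then X ⟨n, h⟩ else eBar S eT) hAe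
  rw [eBar_subst] at final
  have hAX : A.subst (fun n => if h : n < S.sig.ar o then X ⟨n, h⟩ else eBar S eT) =
      .op (Sum.inl o) X := by
    simp only [hA, Term.subst]
    refine congrArg _ (funext fun i => ?_)
    by_cases hik : i = k
    · rw [if_pos hik, heb, eBar_subst, hik, hk]
    · rw [if_neg hik]
      show (if h : (i : Nat) < S.sig.ar o then X ⟨i, h⟩ else eBar S eT) = X i
      rw [dif_pos (show (i : Nat) < S.sig.ar o from i.isLt)]
      exact congrArg X (Fin.ext rfl)
  rwa [hAX] at final

theorem annih_term {C : Composite S T} (hC : IsComposite C)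
    (hSu : HasUnits S) (hT0 : VarFree0 T) (eT : Term T.sig Empty)
    (s : Term S.sig W) (θ : W → Term (S.sig.sum T.sig) V) (x : W)
    (hx : x ∈ s.fv) (hθ : θ x = eBar S eT) :
    C.U.Eq ((Term.inL (B := T.sig) s).subst θ) (eBar S eT) := by
  classical
  induction s with
  | var w =>
      simp only [Term.fv, Set.mem_singleton_iff] at hx
      subst hx
      have h : (Term.inL (B := T.sig) (Term.var x)).subst θ = eBar S eT := hθ
      rw [h]
      exact Theory.Eq.refl _
  | op o ts ih =>
      simp only [Term.fv, Set.mem_iUnion] at hx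
      obtain ⟨kk, hkk⟩ := hx
      simp only [Term.inL, Term.subst]
      set ts' : Fin (S.sig.ar o) → Term (S.sig.sum T.sig) V :=
        fun i => if i = kk then eBar S eT else (Term.inL (ts i)).subst θ with hts'
      have hcong : C.U.Eq (Term.op (Sum.inl o) fun i => (Term.inL (ts i)).subst θ)
          (Term.op (Sum.inl o) ts') := Theory.Eq.congr _ fun i => ?_
      refine Theory.Eq.trans hcong (annih_op hC hSu hT0 eT o kk ts' (by simp [hts']))
      by_cases hik : i = kk
      · subst hik; show C.U.Eq _ (ts' i); rw [show ts' i = eBar S eT from if_pos rfl]; simpa using ih i hkk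
      · show C.U.Eq _ (ts' i); rw [show ts' i = _ from if_neg hik]; exact Theory.Eq.refl _

end TP
namespace TP

variable {S T : Theory}

theorem subst_var_apply {Sg : Signature} {V W : Type} (v : V) (f : V → Term Sg W) :
    (Term.var v).subst f = f v := rfl

theorem var_inj (hS1 : VarSingle S) {i j : Nat}
    (h : S.Eq (.var i) (.var j)) : i = j := by
  have h2 := hS1 Nat j _ h
  have h3 : i ∈ ({j} : Set Nat) := h2 (by simp [Term.fv])
  simpa using h3

/-- The unit of `S` as a closed term of the sum signature. -/
def eSb (T : Theory) (eS : Term S.sig Empty) {V : Type} : Term (S.sig.sum T.sig) V :=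
  Term.ofClosed (Term.inL (B := T.sig) eS)

theorem eSb_subst (eS : Term S.sig Empty) {V W : Type} (f : V → Term (S.sig.sum T.sig) W) :
    (eSb T eS (V := V)).subst f = eSb T eS := ofClosed_subst _ _

theorem d_unit {C : Composite S T} (hC : IsComposite C)
    (d : Term S.sig Nat) (eS : Term S.sig Empty)
    (hdu1 : S.Eq (app2 d (.var 0) (Term.ofClosed eS)) (.var (0 : Nat)))
    {V : Type} (Y : Term (S.sig.sum T.sig) V) :
    C.U.Eq (app2 (Term.inL d) Y (eSb T eS)) Y := by
  have h0 := hC.containsS _ _ hdu1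
  rw [inL_app2, inL_ofClosed] at h0
  have h1 := Theory.Eq.subst (fun _ : Nat => Y) h0
  rw [app2_subst] at h1
  rw [show ((Term.ofClosed (Term.inL (B := T.sig) eS) : Term _ Nat).subst fun _ => Y) =
    eSb T eS from ofClosed_subst _ _] at h1
  exact h1

theorem c_unitR {C : Composite S T} (hC : IsComposite C)
    (c : Term T.sig Nat) (eT : Term T.sig Empty)
    (hcu1 : T.Eq (app2 c (.var 0) (Term.ofClosed eT)) (.var (0 : Nat)))
    {V : Type} (Y : Term (S.sig.sum T.sig) V) :
    C.U.Eq (app2 (Term.inR c) Y (eBar S eT)) Y := by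
  have h0 := hC.containsT _ _ hcu1
  rw [inR_app2, inR_ofClosed] at h0
  have h1 := Theory.Eq.subst (fun _ : Nat => Y) h0
  rw [app2_subst] at h1
  rw [show ((Term.ofClosed (Term.inR (A := S.sig) eT) : Term _ Nat).subst fun _ => Y) =
    eBar S eT from ofClosed_subst _ _] at h1
  exact h1

theorem c_unitL {C : Composite S T} (hC : IsComposite C)
    (c : Term T.sig Nat) (eT : Term T.sig Empty)
    (hcu2 : T.Eq (app2 c (Term.ofClosed eT) (.var 0)) (.var (0 : Nat)))
    {V : Type} (Y : Term (S.sig.sum T.sig) V) :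
    C.U.Eq (app2 (Term.inR c) (eBar S eT) Y) Y := by
  have h0 := hC.containsT _ _ hcu2
  rw [inR_app2, inR_ofClosed] at h0
  have h1 := Theory.Eq.subst (fun _ : Nat => Y) h0
  rw [app2_subst] at h1
  rw [show ((Term.ofClosed (Term.inR (A := S.sig) eT) : Term _ Nat).subst fun _ => Y) =
    eBar S eT from ofClosed_subst _ _] at h1
  exact h1

theorem c_const (c : Term T.sig Nat) (eT : Term T.sig Empty)
    (hcu1 : T.Eq (app2 c (.var 0) (Term.ofClosed eT)) (.var (0 : Nat))) :
    T.Eq (c.subst fun _ => (Term.ofClosed eT : Term T.sig Nat)) (Term.ofClosed eT) := by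
  have h1 := Theory.Eq.subst (fun _ : Nat => (Term.ofClosed eT : Term T.sig Nat)) hcu1
  rw [app2_subst, ofClosed_subst] at h1
  rw [show app2 c ((Term.var (0:Nat)).subst fun _ => (Term.ofClosed eT : Term T.sig Nat))
      (Term.ofClosed eT) = c.subst fun _ => Term.ofClosed eT by
    rw [app2]; exact subst_eq_on_fv fun v _ => by split <;> rfl] at h1
  exact h1

end TP
namespace TP

theorem key {S T : Theory} {C : Composite S T} (hC : IsComposite C)
    (hS0 : VarFree0 S) (hS1 : VarSingle S) (hSu : HasUnits S)
    (d : Term S.sig Nat) (eS : Term S.sig Empty)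
    (hdu1 : S.Eq (app2 d (.var 0) (Term.ofClosed eS)) (.var (0 : Nat)))
    (hT0 : VarFree0 T) (hT1 : VarSingle T)
    (c : Term T.sig Nat) (hc : c.fv ⊆ {0, 1}) (eT : Term T.sig Empty)
    (hcu1 : T.Eq (app2 c (.var 0) (Term.ofClosed eT)) (.var (0 : Nat)))
    (hcu2 : T.Eq (app2 c (Term.ofClosed eT) (.var 0)) (.var (0 : Nat))) :
    C.U.Eq
      (app2 (Term.inL (B := T.sig) d) (app2 (Term.inR (A := S.sig) c) (.var 0) (.var 1))
        (.var (2 : Nat)))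
      (app2 (Term.inR (A := S.sig) c) (app2 (Term.inL (B := T.sig) d) (.var 0) (.var 2))
        (app2 (Term.inL (B := T.sig) d) (.var 1) (.var 2))) := by
  classical
  obtain ⟨t, σ, hsep⟩ := hC.separation
    (app2 (Term.inL (B := T.sig) d) (app2 (Term.inR (A := S.sig) c) (.var 0) (.var 1))
      (.var (2 : Nat)))
  set A : Term (S.sig.sum T.sig) Nat := app2 (Term.inR (A := S.sig) c) (.var 0) (.var 1) with hA
  set u : Term (S.sig.sum T.sig) Nat := app2 (Term.inL (B := T.sig) d) A (.var 2) with hu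
  -- A is essentially `inR c`
  have hAc : A = Term.inR c := by
    rw [hA, app2]
    have h1 : ∀ v ∈ (Term.inR (A := S.sig) c).fv,
        (fun n => if n = 0 then (Term.var 0 : Term (S.sig.sum T.sig) Nat) else .var 1) v
          = Term.var v := by
      intro v hv
      rw [fv_inR] at hv
      have := hc hv
      simp only [Set.mem_insert_iff, Set.mem_singleton_iff] at this
      rcases this with rfl | rfl <;> simp
    rw [subst_eq_on_fv h1, subst_var]
  have hAsep : A = sep c (fun n => Term.var n) := by
    rw [hAc]
    exact (subst_var _).symm
  -- ### Step A : substitute e_S for variable 2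
  set τ₂ : Nat → Term S.sig Nat := fun n => if n = 2 then Term.ofClosed eS else Term.var n with hτ₂
  set σ₂ : Nat → Term S.sig Nat := fun n => (σ n).subst τ₂ with hσ₂
  have hstepA : C.U.Eq (sep t σ₂) (sep c (fun n => Term.var n)) := by
    have h2 := Theory.Eq.subst (fun v => Term.inL (τ₂ v)) hsep
    rw [sep_subst_S, ← hσ₂] at h2
    have hL : u.subst (fun v => Term.inL (τ₂ v))
        = app2 (Term.inL (B := T.sig) d) A (eSb T eS) := by
      rw [hu, app2_subst]
      rw [show A.subst (fun v => Term.inL (τ₂ v)) = A from by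
        rw [hA, app2_subst]
        simp [subst_var_apply, hτ₂, Term.inL]]
      rw [show (Term.var (2:Nat)).subst (fun v => Term.inL (τ₂ v)) = eSb T eS from by
        simp [subst_var_apply, hτ₂, eSb, inL_ofClosed]]
    have h3 : C.U.Eq (u.subst (fun v => Term.inL (τ₂ v))) (sep c (fun n => Term.var n)) := by
      rw [hL, ← hAsep]
      exact d_unit hC d eS hdu1 A
    exact h2.symm.trans h3
  obtain ⟨Z, f, g, hfg, hff, hgg, hfgc⟩ := hC.essUniq t c σ₂ (fun n => Term.var n) hstepA
  have hg01 : g 0 ≠ g 1 := fun h =>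
    absurd (var_inj hS1 ((hgg 0 1).1 h)) (by norm_num)
  -- ### every variable of t is in the class of 0 or of 1
  have hQ1 : ∀ n ∈ t.fv, f n = g 0 ∨ f n = g 1 := by
    intro n hn
    by_contra hcon
    push_neg at hcon
    obtain ⟨h0, h1⟩ := hcon
    set h : Z → Term T.sig Nat :=
      fun z => if z = g 0 ∨ z = g 1 then Term.ofClosed eT else Term.var 0 with hh
    have hcg : (c.rename g).subst h = c.subst fun _ => Term.ofClosed eT := by
      rw [Term.rename, subst_subst]
      refine subst_eq_on_fv fun v hv => ?_
      have := hc hv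
      simp only [Set.mem_insert_iff, Set.mem_singleton_iff] at this
      rcases this with rfl | rfl <;> simp [subst_var_apply, hh]
    have h7 : T.Eq ((t.rename f).subst h) (Term.ofClosed eT) := by
      have h6 := Theory.Eq.subst h hfg
      rw [hcg] at h6
      exact h6.trans (c_const c eT hcu1)
    have h8 := hT0 _ _ _ (fv_ofClosed _) (Theory.Eq.symm h7)
    have h9 : (0 : Nat) ∈ ((t.rename f).subst h).fv := by
      have hv1 : f n ∈ (t.rename f).fv := by
        rw [Term.rename]
        exact mem_fv_subst hn (by simp [Term.fv])
      refine mem_fv_subst hv1 ?_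
      simp only [hh]
      rw [if_neg (not_or.mpr ⟨h0, h1⟩)]
      simp [Term.fv]
    rw [h8] at h9
    exact absurd h9 (Set.notMem_empty _)
  -- the classification function
  set cls : Nat → Nat := fun n => if f n = g 0 then 0 else 1 with hcls
  have hclsg : ∀ n ∈ t.fv, f n = g (cls n) := by
    intro n hn
    by_cases hcl : f n = g 0
    · simpa [hcls, hcl] using hcl
    · rcases hQ1 n hn with h' | h'
      · exact absurd h' hcl
      · simpa [hcls, hcl] using h'
  have hσ₂var : ∀ n ∈ t.fv, S.Eq (σ₂ n) (Term.var (cls n)) :=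
    fun n hn => (hfgc n (cls n)).1 (hclsg n hn)
  have hfvσ : ∀ n ∈ t.fv, (σ n).fv ⊆ {cls n, 2} := by
    intro n hn v hv
    by_cases hv2 : v = 2
    · simp [hv2]
    · have hm : v ∈ (σ₂ n).fv := by
        rw [hσ₂]
        exact mem_fv_subst hv (by simp [hτ₂, hv2, Term.fv])
      have := hS1 _ _ _ (hσ₂var n hn) hm
      simp only [Set.mem_singleton_iff] at this
      simp [this]
  have hclsmem : ∀ n ∈ t.fv, cls n ∈ (σ n).fv := by
    intro n hn
    by_contra hno
    have hempty : (σ₂ n).fv = ∅ := by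
      rw [Set.eq_empty_iff_forall_notMem]
      intro w hw
      rw [hσ₂] at hw
      obtain ⟨v, hv, hw'⟩ := fv_subst_sub hw
      have := hfvσ n hn hv
      simp only [Set.mem_insert_iff, Set.mem_singleton_iff] at this
      rcases this with rfl | rfl
      · exact hno hv
      · simp [hτ₂, fv_ofClosed] at hw'
    have := hS0 _ _ _ hempty (hσ₂var n hn)
    simp [Term.fv] at this
  -- ### the substitution killing variable 1
  set θ₁ : Nat → Term (S.sig.sum T.sig) Nat :=
    fun n => if n = 1 then eBar S eT else Term.var n with hθ₁
  have hu1 : C.U.Eq (u.subst θ₁)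
      (app2 (Term.inL (B := T.sig) d) (.var 0) (.var 2)) := by
    rw [hu, app2_subst]
    rw [show (Term.var (2:Nat)).subst θ₁ = (Term.var 2 : Term (S.sig.sum T.sig) Nat) from by
      simp [subst_var_apply, hθ₁]]
    rw [show A.subst θ₁ = app2 (Term.inR (A := S.sig) c) (.var 0) (eBar S eT) from by
      rw [hA, app2_subst]
      simp [subst_var_apply, hθ₁]]
    rw [app2, app2]
    refine eq_subst_congr fun v _ => ?_
    by_cases hv : v = 0
    · simpa [hv, app2] using c_unitR hC c eT hcu1 (Term.var 0 : Term (S.sig.sum T.sig) Nat)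
    · simp [hv]
      exact Theory.Eq.refl _
  set Θ : Nat → Term (S.sig.sum T.sig) Nat :=
    fun n => if f n = g 0 then Term.inL (σ n) else eBar S eT with hΘ
  have hRHS1 : C.U.Eq ((sep t σ).subst θ₁) ((Term.inR (A := S.sig) t).subst Θ) := by
    rw [sep_def, subst_subst]
    refine eq_subst_congr fun n hn => ?_
    rw [fv_inR] at hn
    by_cases hcl : f n = g 0
    · have hcls0 : cls n = 0 := by rw [hcls]; simp [hcl]
      have hid : (Term.inL (B := T.sig) (σ n)).subst θ₁ = Term.inL (σ n) := by
        have hpt : ∀ v ∈ (Term.inL (B := T.sig) (σ n)).fv, θ₁ v = Term.var v := by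
          intro v hv
          rw [fv_inL] at hv
          have := hfvσ n hn hv
          rw [hcls0] at this
          simp only [Set.mem_insert_iff, Set.mem_singleton_iff] at this
          rcases this with rfl | rfl <;> simp [hθ₁]
        rw [subst_eq_on_fv hpt, subst_var]
      have hΘn : Θ n = Term.inL (σ n) := by rw [hΘ]; exact if_pos hcl
      show C.U.Eq ((Term.inL (B := T.sig) (σ n)).subst θ₁) (Θ n)
      rw [hid, hΘn]
      exact Theory.Eq.refl _
    · have hcls1 : cls n = 1 := by rw [hcls]; simp [hcl]
      have h1mem : (1:Nat) ∈ (σ n).fv := by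
        have := hclsmem n hn; rwa [hcls1] at this
      have hΘn : Θ n = eBar S eT := by rw [hΘ]; exact if_neg hcl
      show C.U.Eq ((Term.inL (B := T.sig) (σ n)).subst θ₁) (Θ n)
      rw [hΘn]
      exact annih_term hC hSu hT0 eT (σ n) θ₁ 1 h1mem (by simp [hθ₁])
  have ht₁ : (Term.inR (A := S.sig) t).subst Θ =
      sep (t.subst fun n => if f n = g 0 then Term.var n else Term.ofClosed eT) σ := by
    rw [sep_def, inR_subst, subst_subst]
    refine congrArg (Term.subst (Term.inR t)) (funext fun n => ?_)
    by_cases hcl : f n = g 0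
    · simp [hΘ, hcl, Term.inR, subst_var_apply]
    · simp [hΘ, hcl, inR_ofClosed, ofClosed_subst, eBar]
  have hE4 : C.U.Eq
      (sep (t.subst fun n => if f n = g 0 then Term.var n else Term.ofClosed eT) σ)
      (sep (Term.var 0) fun _ => app2 d (.var 0) (.var 2)) := by
    have hsv : sep (S := S) (T := T) (Term.var 0) (fun _ => app2 d (.var 0) (.var 2)) =
        app2 (Term.inL (B := T.sig) d) (.var 0) (.var 2) := by
      rw [sep_var, inL_app2]
      rfl
    rw [hsv, ← ht₁]
    exact hRHS1.symm.trans ((Theory.Eq.subst θ₁ hsep).symm.trans hu1)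
  obtain ⟨Z₁, f₁, g₁, h₁fg, -, -, h₁c⟩ := hC.essUniq _ _ _ _ hE4
  have hR0 : ∀ n ∈ t.fv, f n = g 0 → S.Eq (σ n) (app2 d (.var 0) (.var 2)) := by
    intro n hn hcl
    have hmem₁ : n ∈ (t.subst fun m =>
        if f m = g 0 then (Term.var m : Term T.sig Nat) else Term.ofClosed eT).fv :=
      mem_fv_subst hn (by simp [hcl, Term.fv])
    have hfvsub := hT1 _ (g₁ 0) _ h₁fg
    have hmem₂ : f₁ n ∈ ((t.subst fun m =>
        if f m = g 0 then (Term.var m : Term T.sig Nat) else Term.ofClosed eT).rename f₁).fv := by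
      rw [Term.rename]
      exact mem_fv_subst hmem₁ (by simp [Term.fv])
    have : f₁ n = g₁ 0 := by simpa using hfvsub hmem₂
    exact (h₁c n 0).1 this
  -- ### the substitution killing variable 0
  set θ₀ : Nat → Term (S.sig.sum T.sig) Nat :=
    fun n => if n = 0 then eBar S eT else Term.var n with hθ₀
  have hu0 : C.U.Eq (u.subst θ₀)
      (app2 (Term.inL (B := T.sig) d) (.var 1) (.var 2)) := by
    rw [hu, app2_subst]
    rw [show (Term.var (2:Nat)).subst θ₀ = (Term.var 2 : Term (S.sig.sum T.sig) Nat) from by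
      simp [subst_var_apply, hθ₀]]
    rw [show A.subst θ₀ = app2 (Term.inR (A := S.sig) c) (eBar S eT) (.var 1) from by
      rw [hA, app2_subst]
      simp [subst_var_apply, hθ₀]]
    rw [app2, app2]
    refine eq_subst_congr fun v _ => ?_
    by_cases hv : v = 0
    · simpa [hv, app2] using c_unitL hC c eT hcu2 (Term.var 1 : Term (S.sig.sum T.sig) Nat)
    · simp [hv]
      exact Theory.Eq.refl _
  set Θ' : Nat → Term (S.sig.sum T.sig) Nat :=
    fun n => if f n = g 0 then eBar S eT else Term.inL (σ n) with hΘ'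
  have hRHS0 : C.U.Eq ((sep t σ).subst θ₀) ((Term.inR (A := S.sig) t).subst Θ') := by
    rw [sep_def, subst_subst]
    refine eq_subst_congr fun n hn => ?_
    rw [fv_inR] at hn
    by_cases hcl : f n = g 0
    · have hcls0 : cls n = 0 := by rw [hcls]; simp [hcl]
      have h0mem : (0:Nat) ∈ (σ n).fv := by
        have := hclsmem n hn; rwa [hcls0] at this
      have hΘn : Θ' n = eBar S eT := by rw [hΘ']; exact if_pos hcl
      show C.U.Eq ((Term.inL (B := T.sig) (σ n)).subst θ₀) (Θ' n)
      rw [hΘn]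
      exact annih_term hC hSu hT0 eT (σ n) θ₀ 0 h0mem (by simp [hθ₀])
    · have hcls1 : cls n = 1 := by rw [hcls]; simp [hcl]
      have hid : (Term.inL (B := T.sig) (σ n)).subst θ₀ = Term.inL (σ n) := by
        have hpt : ∀ v ∈ (Term.inL (B := T.sig) (σ n)).fv, θ₀ v = Term.var v := by
          intro v hv
          rw [fv_inL] at hv
          have := hfvσ n hn hv
          rw [hcls1] at this
          simp only [Set.mem_insert_iff, Set.mem_singleton_iff] at this
          rcases this with rfl | rfl <;> simp [hθ₀]
        rw [subst_eq_on_fv hpt, subst_var]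
      have hΘn : Θ' n = Term.inL (σ n) := by rw [hΘ']; exact if_neg hcl
      show C.U.Eq ((Term.inL (B := T.sig) (σ n)).subst θ₀) (Θ' n)
      rw [hid, hΘn]
      exact Theory.Eq.refl _
  have ht₂ : (Term.inR (A := S.sig) t).subst Θ' =
      sep (t.subst fun n => if f n = g 0 then Term.ofClosed eT else Term.var n) σ := by
    rw [sep_def, inR_subst, subst_subst]
    refine congrArg (Term.subst (Term.inR t)) (funext fun n => ?_)
    by_cases hcl : f n = g 0
    · simp [hΘ', hcl, inR_ofClosed, ofClosed_subst, eBar]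
    · simp [hΘ', hcl, Term.inR, subst_var_apply]
  have hE4' : C.U.Eq
      (sep (t.subst fun n => if f n = g 0 then Term.ofClosed eT else Term.var n) σ)
      (sep (Term.var 0) fun _ => app2 d (.var 1) (.var 2)) := by
    have hsv : sep (S := S) (T := T) (Term.var 0) (fun _ => app2 d (.var 1) (.var 2)) =
        app2 (Term.inL (B := T.sig) d) (.var 1) (.var 2) := by
      rw [sep_var, inL_app2]
      rfl
    rw [hsv, ← ht₂]
    exact hRHS0.symm.trans ((Theory.Eq.subst θ₀ hsep).symm.trans hu0)
  obtain ⟨Z₂, f₂, g₂, h₂fg, -, -, h₂c⟩ := hC.essUniq _ _ _ _ hE4'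
  have hR1 : ∀ n ∈ t.fv, ¬ (f n = g 0) → S.Eq (σ n) (app2 d (.var 1) (.var 2)) := by
    intro n hn hcl
    have hmem₁ : n ∈ (t.subst fun m =>
        if f m = g 0 then Term.ofClosed eT else (Term.var m : Term T.sig Nat)).fv :=
      mem_fv_subst hn (by simp [hcl, Term.fv])
    have hfvsub := hT1 _ (g₂ 0) _ h₂fg
    have hmem₂ : f₂ n ∈ ((t.subst fun m =>
        if f m = g 0 then Term.ofClosed eT else (Term.var m : Term T.sig Nat)).rename f₂).fv := by
      rw [Term.rename]
      exact mem_fv_subst hmem₁ (by simp [Term.fv])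
    have : f₂ n = g₂ 0 := by simpa using hfvsub hmem₂
    exact (h₂c n 0).1 this
  -- ### `t` renamed along `cls` is `c`
  have hP2 : T.Eq (t.rename cls) c := by
    set h' : Z → Nat := fun z => if z = g 0 then 0 else 1 with hh'
    have h10 := Theory.Eq.subst (fun z => (Term.var (h' z) : Term T.sig Nat)) hfg
    have hL : (t.rename f).subst (fun z => (Term.var (h' z) : Term T.sig Nat))
        = t.rename cls := by
      rw [Term.rename, Term.rename, subst_subst]
      refine subst_eq_on_fv fun v _ => ?_
      rw [subst_var_apply]
    have hR : (c.rename g).subst (fun z => (Term.var (h' z) : Term T.sig Nat)) = c := by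
      rw [Term.rename, subst_subst]
      have hpt : ∀ v ∈ c.fv,
          ((Term.var (g v)).subst fun z => (Term.var (h' z) : Term T.sig Nat))
            = Term.var v := by
        intro v hv
        have := hc hv
        simp only [Set.mem_insert_iff, Set.mem_singleton_iff] at this
        rcases this with rfl | rfl
        · simp [subst_var_apply, hh']
        · rw [subst_var_apply, hh']
          simp only [if_neg (Ne.symm hg01)]
      rw [subst_eq_on_fv hpt, subst_var]
    rw [hL, hR] at h10
    exact h10
  -- ### assemble
  have hF1 : C.U.Eq (sep t σ) (sep t fun n =>
      if f n = g 0 then app2 d (.var 0) (.var 2) else app2 d (.var 1) (.var 2)) := by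
    rw [sep_def, sep_def]
    refine eq_subst_congr fun n hn => ?_
    rw [fv_inR] at hn
    show C.U.Eq (Term.inL (σ n)) (Term.inL (if f n = g 0 then
      app2 d (.var 0) (.var 2) else app2 d (.var 1) (.var 2)))
    by_cases hcl : f n = g 0
    · rw [if_pos hcl]
      exact hC.containsS _ _ (hR0 n hn hcl)
    · rw [if_neg hcl]
      exact hC.containsS _ _ (hR1 n hn hcl)
  have hF2 : (sep t fun n =>
      if f n = g 0 then app2 d (.var 0) (.var 2) else app2 d (.var 1) (.var 2)) =
      sep (t.rename cls) (fun m =>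
        if m = 0 then app2 d (.var 0) (.var 2) else app2 d (.var 1) (.var 2)) := by
    rw [sep_rename]
    refine congrArg (sep t) (funext fun n => ?_)
    by_cases hcl : f n = g 0 <;> simp [hcls, hcl]
  have hF4 : C.U.Eq
      (sep (t.rename cls) (fun m =>
        if m = 0 then app2 d (.var 0) (.var 2) else app2 d (.var 1) (.var 2)))
      (sep c (fun m =>
        if m = 0 then app2 d (.var 0) (.var 2) else app2 d (.var 1) (.var 2))) :=
    Theory.Eq.subst _ (hC.containsT _ _ hP2)
  have hF5 : sep c (fun m =>
      if m = 0 then app2 d (.var 0) (.var 2) else app2 d (.var 1) (.var 2)) =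
      app2 (Term.inR (A := S.sig) c)
        (app2 (Term.inL (B := T.sig) d) (.var 0) (.var 2))
        (app2 (Term.inL (B := T.sig) d) (.var 1) (.var 2)) := by
    rw [show app2 (Term.inR (A := S.sig) c)
        (app2 (Term.inL (B := T.sig) d) (.var 0) (.var 2))
        (app2 (Term.inL (B := T.sig) d) (.var 1) (.var 2)) =
        (Term.inR (A := S.sig) c).subst (fun n =>
          if n = 0 then app2 (Term.inL (B := T.sig) d) (.var 0) (.var 2)
          else app2 (Term.inL (B := T.sig) d) (.var 1) (.var 2)) from rfl]
    rw [sep_def]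
    refine congrArg (Term.subst (Term.inR c)) (funext fun n => ?_)
    by_cases hn0 : n = 0 <;> simp [hn0, inL_app2, Term.inL]
  have hfin := hsep.trans hF1
  rw [hF2] at hfin
  have hfin2 := hfin.trans hF4
  rw [hF5] at hfin2
  exact hfin2

end TP
namespace TP

/-- The transposition of the variables `0` and `1`. -/
def sw : Nat → Nat := fun n => if n = 0 then 1 else if n = 1 then 0 else n

theorem app2_swap {Sg : Signature} {V : Type} {X : Term Sg Nat} (hX : X.fv ⊆ {0, 1})
    (a b : Term Sg V) : app2 (X.rename sw) a b = app2 X b a := by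
  rw [app2, app2, Term.rename, subst_subst]
  refine subst_eq_on_fv fun v hv => ?_
  have := hX hv
  simp only [Set.mem_insert_iff, Set.mem_singleton_iff] at this
  rcases this with rfl | rfl <;> simp [subst_var_apply, sw]

theorem inL_rename {A B : Signature} {V W : Type} (t : Term A V) (r : V → W) :
    (t.rename r).inL (B := B) = t.inL.rename r := by
  rw [Term.rename, inL_subst, Term.rename]
  exact congrArg _ (funext fun v => rfl)

end TP
/-- **Times over plus theorem.** Let `𝕊` satisfy the two variable conditions, have a
unit constant for every positive-arity operation, and have a binary term `⋄` (here
`d`) with two-sided unit `e_⋄`; let `𝕋` satisfy the two variable conditions and have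
a binary term `◦` (here `c`) with a two-sided unit constant `e_◦`. Then in any
composite theory `𝕌` of `𝕊` and `𝕋`, `⋄` distributes over `◦` on both sides. -/
theorem times_over_plus (S T : Theory)
    (hS0 : VarFree0 S) (hS1 : VarSingle S) (hSu : HasUnits S)
    (d : Term S.sig Nat) (hd : d.fv ⊆ {0, 1}) (eS : Term S.sig Empty)
    (hdu1 : S.Eq (app2 d (.var 0) (Term.ofClosed eS)) (.var (0 : Nat)))
    (hdu2 : S.Eq (app2 d (Term.ofClosed eS) (.var 0)) (.var (0 : Nat)))
    (hT0 : VarFree0 T) (hT1 : VarSingle T)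
    (c : Term T.sig Nat) (hc : c.fv ⊆ {0, 1}) (eT : Term T.sig Empty)
    (hcu1 : T.Eq (app2 c (.var 0) (Term.ofClosed eT)) (.var (0 : Nat)))
    (hcu2 : T.Eq (app2 c (Term.ofClosed eT) (.var 0)) (.var (0 : Nat)))
    (C : Composite S T) (hC : IsComposite C) :
    C.U.Eq (app2 d.inL (app2 c.inR (.var 0) (.var 1)) (.var (2 : Nat)))
        (app2 c.inR (app2 d.inL (.var 0) (.var 2)) (app2 d.inL (.var 1) (.var 2))) ∧
    C.U.Eq (app2 d.inL (.var (2 : Nat)) (app2 c.inR (.var 0) (.var 1)))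
        (app2 c.inR (app2 d.inL (.var 2) (.var 0)) (app2 d.inL (.var 2) (.var 1))) := by
  constructor
  · exact TP.key hC hS0 hS1 hSu d eS hdu1 hT0 hT1 c hc eT hcu1 hcu2
  · have hd'u1 : S.Eq (app2 (d.rename TP.sw) (.var 0) (Term.ofClosed eS)) (.var (0 : Nat)) := by
      rw [TP.app2_swap hd]
      exact hdu2
    have h2 := TP.key hC hS0 hS1 hSu (d.rename TP.sw) eS hd'u1 hT0 hT1 c hc eT hcu1 hcu2
    have hdX : (Term.inL (B := T.sig) d).fv ⊆ {0, 1} := by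
      rw [TP.fv_inL]
      exact hd
    rw [TP.inL_rename] at h2
    simp only [TP.app2_swap hdX] at h2
    exact h2
end

section
/- Let 𝕊 and 𝕋 satisfy the hypotheses of the times-over-plus theorem, and additionally let the binary term ⋄ of 𝕊 be idempotent: ⋄(x,x) =_𝕊 x. Then there exists no composite theory of 𝕊 and 𝕋. -/
/-! ### Auxiliary lemmas -/

namespace NoGoAux

open Term

variable {Sg : Signature} {V W X : Type}

theorem subst_subst (t : Term Sg V) (f : V → Term Sg W) (g : W → Term Sg X) :
    (t.subst f).subst g = t.subst (fun v => (f v).subst g) := by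
  induction t with
  | var v => rfl
  | op o ts ih => simp only [Term.subst]; congr 1; funext i; exact ih i

theorem subst_var (t : Term Sg V) : t.subst (fun v => .var v) = t := by
  induction t with
  | var v => rfl
  | op o ts ih => simp only [Term.subst]; congr 1; funext i; exact ih i

theorem substCongr {t : Term Sg V} {f g : V → Term Sg W}
    (h : ∀ v ∈ t.fv, f v = g v) : t.subst f = t.subst g := by
  induction t with
  | var v => exact h v (by simp [Term.fv])
  | op o ts ih =>
      simp only [Term.subst]; congr 1; funext i
      exact ih i (fun v hv => h v (by simp only [Term.fv, Set.mem_iUnion]; exact ⟨i, hv⟩))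

theorem fv_subst (t : Term Sg V) (f : V → Term Sg W) :
    (t.subst f).fv = ⋃ v ∈ t.fv, (f v).fv := by
  induction t with
  | var v => simp [Term.subst, Term.fv]
  | op o ts ih =>
      simp only [Term.subst, Term.fv, ih]
      ext w
      simp only [Set.mem_iUnion]
      constructor
      · rintro ⟨i, v, hv, hw⟩; exact ⟨v, ⟨i, hv⟩, hw⟩
      · rintro ⟨v, ⟨i, hv⟩, hw⟩; exact ⟨i, v, hv, hw⟩

theorem fv_rename (t : Term Sg V) (f : V → W) :
    (t.rename f).fv = f '' t.fv := by
  rw [Term.rename, fv_subst]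
  ext w
  simp only [Term.fv, Set.mem_iUnion, Set.mem_singleton_iff, Set.mem_image, exists_prop]
  constructor
  · rintro ⟨i, hi, hw⟩; exact ⟨i, hi, hw.symm⟩
  · rintro ⟨i, hi, hw⟩; exact ⟨i, hi, hw.symm⟩

theorem rename_eq_subst (t : Term Sg V) (f : V → W) :
    t.rename f = t.subst (fun v => .var (f v)) := rfl

theorem subst_closed {t : Term Sg V} (ht : t.fv = ∅) (f g : V → Term Sg W) :
    t.subst f = t.subst g :=
  substCongr (fun v hv => by rw [ht] at hv; exact absurd hv (Set.notMem_empty v))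

variable {A B : Signature}

theorem inL_subst (s : Term A V) (f : V → Term A W) :
    (Term.inL (B := B) (s.subst f)) = (Term.inL s).subst (fun v => Term.inL (f v)) := by
  induction s with
  | var v => rfl
  | op o ts ih => simp only [Term.subst, Term.inL]; congr 1; funext i; exact ih i

theorem inR_subst (s : Term B V) (f : V → Term B W) :
    (Term.inR (A := A) (s.subst f)) = (Term.inR s).subst (fun v => Term.inR (f v)) := by
  induction s with
  | var v => rfl
  | op o ts ih => simp only [Term.subst, Term.inR]; congr 1; funext i; exact ih i

theorem fv_inL (s : Term A V) : (Term.inL (B := B) s).fv = s.fv := by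
  induction s with
  | var v => rfl
  | op o ts ih => simp only [Term.inL, Term.fv]; exact Set.iUnion_congr ih

theorem fv_inR (s : Term B V) : (Term.inR (A := A) s).fv = s.fv := by
  induction s with
  | var v => rfl
  | op o ts ih => simp only [Term.inR, Term.fv]; exact Set.iUnion_congr ih

theorem ofClosed_subst (t : Term Sg Empty) (f : V → Term Sg W) :
    (Term.ofClosed (V := V) t).subst f = Term.ofClosed t := by
  rw [Term.ofClosed, rename_eq_subst, subst_subst]
  exact congrArg t.subst (funext fun x => x.elim)

theorem fv_ofClosed (t : Term Sg Empty) : (Term.ofClosed (V := V) t).fv = ∅ := by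
  rw [Term.ofClosed, fv_rename]
  ext v
  simp only [Set.mem_image, Set.mem_empty_iff_false, iff_false]
  rintro ⟨x, -, -⟩
  exact x.elim

theorem inR_ofClosed (t : Term B Empty) :
    (Term.inR (A := A) (Term.ofClosed (V := V) t)) = Term.ofClosed (Term.inR t) := by
  rw [Term.ofClosed, rename_eq_subst, inR_subst, Term.ofClosed, rename_eq_subst]
  exact congrArg _ (funext fun x : Empty => x.elim)

theorem inL_ofClosed (t : Term A Empty) :
    (Term.inL (B := B) (Term.ofClosed (V := V) t)) = Term.ofClosed (Term.inL t) := by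
  rw [Term.ofClosed, rename_eq_subst, inL_subst, Term.ofClosed, rename_eq_subst]
  exact congrArg _ (funext fun x : Empty => x.elim)

theorem app2_subst (t : Term Sg Nat) (a b : Term Sg V) (f : V → Term Sg W) :
    (app2 t a b).subst f = app2 t (a.subst f) (b.subst f) := by
  rw [app2, app2, subst_subst]
  congr 1
  funext n
  by_cases h : n = 0 <;> simp [h]

theorem inL_app2 (t : Term A Nat) (a b : Term A V) :
    (Term.inL (B := B) (app2 t a b)) = app2 (Term.inL t) (Term.inL a) (Term.inL b) := by
  rw [app2, app2, inL_subst]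
  congr 1
  funext n
  by_cases h : n = 0 <;> simp [h]

theorem inR_app2 (t : Term B Nat) (a b : Term B V) :
    (Term.inR (A := A) (app2 t a b)) = app2 (Term.inR t) (Term.inR a) (Term.inR b) := by
  rw [app2, app2, inR_subst]
  congr 1
  funext n
  by_cases h : n = 0 <;> simp [h]

/-- Congruence of provable equality along pointwise-equal substitutions. -/
theorem eq_substCongr (U : Theory) {V W : Type} (t : Term U.sig V) {f g : V → Term U.sig W}
    (h : ∀ v ∈ t.fv, U.Eq (f v) (g v)) : U.Eq (t.subst f) (t.subst g) := by
  induction t with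
  | var v => exact h v (by simp [Term.fv])
  | op o ts ih =>
      exact Theory.Eq.congr o (fun i => ih i
        (fun v hv => h v (by simp only [Term.fv, Set.mem_iUnion]; exact ⟨i, hv⟩)))

/-- The unit `Ε` of the `T`-theory, as a composite term. -/
def Eps (S T : Theory) (eT : Term T.sig Empty) (V : Type) : Term (S.sig.sum T.sig) V :=
  Term.inR (Term.ofClosed eT)

theorem Eps_subst (S T : Theory) (eT : Term T.sig Empty) {V W : Type}
    (f : V → Term (S.sig.sum T.sig) W) : (Eps S T eT V).subst f = Eps S T eT W := by
  rw [Eps, inR_ofClosed, ofClosed_subst, Eps, inR_ofClosed]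

theorem fv_Eps (S T : Theory) (eT : Term T.sig Empty) (V : Type) :
    (Eps S T eT V).fv = ∅ := by
  rw [Eps, inR_ofClosed, fv_ofClosed]

theorem Eps_eq (S T : Theory) (eT : Term T.sig Empty) (V : Type) :
    Eps S T eT V = Term.ofClosed (Term.inR eT) := inR_ofClosed eT

theorem sep_eps (S T : Theory) (eT : Term T.sig Empty) {V : Type}
    (σ : Nat → Term S.sig V) :
    sep (S := S) (T := T) (Term.ofClosed eT) σ = Eps S T eT V := by
  rw [sep, inR_ofClosed, ofClosed_subst, Eps, inR_ofClosed]

/-- Substituting `S`-terms for variables preserves separated form. -/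
theorem sep_subst (S T : Theory) {V W : Type} (t : Term T.sig Nat)
    (σ : Nat → Term S.sig V) (ρ : V → Term S.sig W) :
    (sep t σ).subst (fun v => Term.inL (ρ v)) = sep t (fun n => (σ n).subst ρ) := by
  rw [sep, sep, subst_subst]
  congr 1
  funext n
  rw [inL_subst]


theorem inL_var {v : V} : (Term.inL (B := B) (.var v)) = (.var v : Term (A.sum B) V) := rfl
theorem inR_var {v : V} : (Term.inR (A := A) (.var v)) = (.var v : Term (A.sum B) V) := rfl
theorem var_subst (v : V) (f : V → Term Sg W) : (Term.var v).subst f = f v := rfl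
theorem ofClosed_rename (t : Term Sg Empty) (f : V → W) :
    (Term.ofClosed (V := V) t).rename f = Term.ofClosed t := ofClosed_subst t _

theorem inL_op (o : A.Op) (ts : Fin (A.ar o) → Term A V) :
    Term.inL (B := B) (.op o ts) = .op (Sum.inl o) (fun i => Term.inL (ts i)) := rfl

theorem inR_op (o : B.Op) (ts : Fin (B.ar o) → Term B V) :
    Term.inR (A := A) (.op o ts) = .op (Sum.inr o) (fun i => Term.inR (ts i)) := rfl

theorem op_subst {Sg' : Signature} (o : Sg'.Op) (ts : Fin (Sg'.ar o) → Term Sg' V)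
    (f : V → Term Sg' W) :
    (Term.op o ts).subst f = .op o (fun i => (ts i).subst f) := rfl

open Classical in
/-- Generalized annihilation: substituting `Ε` for a free variable of an `S`-term
yields a term equal to `Ε` in the composite. -/
theorem gaplus (S T : Theory) (C : Composite S T) (eT : Term T.sig Empty)
    (hop : ∀ (W : Type) (o : S.sig.Op) (k : Fin (S.sig.ar o))
      (B : Fin (S.sig.ar o) → Term (S.sig.sum T.sig) W),
      C.U.Eq (.op (Sum.inl o) (fun i => if i = k then Eps S T eT W else B i))
        (Eps S T eT W))
    {V W : Type} (h : V → Term (S.sig.sum T.sig) W) (v₀ : V)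
    (hh : h v₀ = Eps S T eT W) :
    ∀ s : Term S.sig V, v₀ ∈ s.fv → C.U.Eq ((Term.inL s).subst h) (Eps S T eT W) := by
  intro s
  induction s with
  | var v =>
      intro hv
      have hv' : v₀ = v := hv
      subst hv'
      show C.U.Eq (h v₀) _
      rw [hh]
      exact Theory.Eq.refl _
  | op o ts ih =>
      intro hv
      obtain ⟨j, hj⟩ : ∃ j, v₀ ∈ (ts j).fv := by
        simpa only [Term.fv, Set.mem_iUnion] using hv
      have h1 : C.U.Eq ((Term.inL (.op o ts)).subst h)
          (.op (Sum.inl o) (fun i => if i = j then Eps S T eT W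
            else (Term.inL (ts i)).subst h)) := by
        show C.U.Eq (Term.op (Sum.inl o) (fun i => (Term.inL (ts i)).subst h)) _
        apply Theory.Eq.congr
        intro i
        by_cases hij : i = j
        · subst hij; erw [if_pos rfl]; exact ih i hj
        · erw [if_neg hij]; exact Theory.Eq.refl _
      exact h1.trans (hop W o j _)

end NoGoAux


namespace NoGoAux

theorem main (S T : Theory)
    (hS0 : VarFree0 S) (hS1 : VarSingle S) (hSu : HasUnits S)
    (d : Term S.sig Nat) (hd : d.fv ⊆ {0, 1}) (eS : Term S.sig Empty)
    (hdu1 : S.Eq (app2 d (.var 0) (Term.ofClosed eS)) (.var (0 : Nat)))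
    (hdu2 : S.Eq (app2 d (Term.ofClosed eS) (.var 0)) (.var (0 : Nat)))
    (hT0 : VarFree0 T) (hT1 : VarSingle T)
    (c : Term T.sig Nat) (hc : c.fv ⊆ {0, 1}) (eT : Term T.sig Empty)
    (hcu1 : T.Eq (app2 c (.var 0) (Term.ofClosed eT)) (.var (0 : Nat)))
    (hcu2 : T.Eq (app2 c (Term.ofClosed eT) (.var 0)) (.var (0 : Nat)))
    (hdidem : S.Eq (d.subst (fun _ => .var (0 : Nat))) (.var 0))
    (C : Composite S T) (hC : IsComposite C) : False := by
  classical
  -- Idempotence of `⋄` in the composite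
  have hidem : ∀ {V : Type} (A : Term (S.sig.sum T.sig) V),
      C.U.Eq (app2 (Term.inL d) A A) A := by
    intro V A
    have h0 := hC.containsS _ _ hdidem
    simp only [inL_subst, inL_var] at h0
    have h1 := Theory.Eq.subst (fun _ : Nat => A) h0
    erw [subst_subst, var_subst] at h1
    have h2 : app2 (Term.inL (B := T.sig) d) A A = (Term.inL d).subst (fun _ => A) :=
      congrArg (Term.inL d).subst (funext fun n => by by_cases h : n = 0 <;> simp [h])
    erw [h2]
    exact h1
  -- Unit laws for `◦` in the composite
  have hunitR : ∀ {V : Type} (A : Term (S.sig.sum T.sig) V),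
      C.U.Eq (app2 (Term.inR c) A (Eps S T eT V)) A := by
    intro V A
    have h0 := hC.containsT _ _ hcu1
    rw [inR_app2] at h0
    have h1 := Theory.Eq.subst (fun _ : Nat => A) h0
    erw [app2_subst] at h1
    simp only [inR_var, var_subst] at h1
    erw [show (Term.inR (A := S.sig) (Term.ofClosed eT)).subst (fun _ : Nat => A)
        = Eps S T eT V from Eps_subst S T eT _] at h1
    exact h1
  have hunitL : ∀ {V : Type} (A : Term (S.sig.sum T.sig) V),
      C.U.Eq (app2 (Term.inR c) (Eps S T eT V) A) A := by
    intro V A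
    have h0 := hC.containsT _ _ hcu2
    rw [inR_app2] at h0
    have h1 := Theory.Eq.subst (fun _ : Nat => A) h0
    erw [app2_subst] at h1
    simp only [inR_var, var_subst] at h1
    erw [show (Term.inR (A := S.sig) (Term.ofClosed eT)).subst (fun _ : Nat => A)
        = Eps S T eT V from Eps_subst S T eT _] at h1
    exact h1
  -- Annihilation at each operation of `S`
  have hop : ∀ (W : Type) (o : S.sig.Op) (k : Fin (S.sig.ar o))
      (B : Fin (S.sig.ar o) → Term (S.sig.sum T.sig) W),
      C.U.Eq (.op (Sum.inl o) (fun i => if i = k then Eps S T eT W else B i))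
        (Eps S T eT W) := by
    intro W o k B
    have har : 1 ≤ S.sig.ar o := by
      have := k.isLt; omega
    obtain ⟨e, he⟩ := hSu o har
    obtain ⟨t₀, σ₀, hsep₀⟩ := hC.separation (Term.op (Sum.inl o) (fun i : Fin (S.sig.ar o) => if i = k then Eps S T eT (Fin (S.sig.ar o)) else .var i) : Term (S.sig.sum T.sig) (Fin (S.sig.ar o)))
    have hmθ : C.U.Eq ((Term.op (Sum.inl o) (fun i : Fin (S.sig.ar o) => if i = k then Eps S T eT (Fin (S.sig.ar o)) else .var i) : Term (S.sig.sum T.sig) (Fin (S.sig.ar o))).subst (fun v => Term.inL ((fun i : Fin (S.sig.ar o) => if i = k then (Term.var k : Term S.sig (Fin (S.sig.ar o))) else Term.ofClosed e) v)))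
        (Eps S T eT (Fin (S.sig.ar o))) := by
      have h0 := hC.containsS _ _ (he k)
      have h1 := Theory.Eq.subst (fun _ : Nat => Eps S T eT (Fin (S.sig.ar o))) h0
      have hL : (Term.inL (B := T.sig) (Term.op o (fun i => if i = k then .var 0 else Term.ofClosed e))).subst
            (fun _ : Nat => Eps S T eT (Fin (S.sig.ar o)))
          = (Term.op (Sum.inl o) (fun i : Fin (S.sig.ar o) => if i = k then Eps S T eT (Fin (S.sig.ar o)) else .var i) : Term (S.sig.sum T.sig) (Fin (S.sig.ar o))).subst (fun v => Term.inL ((fun i : Fin (S.sig.ar o) => if i = k then (Term.var k : Term S.sig (Fin (S.sig.ar o))) else Term.ofClosed e) v)) := by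
        erw [inL_op, op_subst, op_subst]
        congr 1
        refine funext fun (i : Fin (S.sig.ar o)) => ?_
        by_cases hik : i = k
        · subst hik
          simp only [if_pos rfl]
          simp [inL_var, var_subst, Eps_subst]
        · simp only [if_neg hik]
          simp [hik, var_subst, inL_ofClosed, ofClosed_subst]
      erw [hL] at h1
      exact h1
    have h3 : C.U.Eq (sep t₀ (fun n' => (σ₀ n').subst (fun i : Fin (S.sig.ar o) => if i = k then (Term.var k : Term S.sig (Fin (S.sig.ar o))) else Term.ofClosed e)))
        (sep (S := S) (Term.ofClosed eT) (fun _ => Term.ofClosed eS)) := by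
      rw [sep_eps]
      have h2 := Theory.Eq.subst (fun v => Term.inL ((fun i : Fin (S.sig.ar o) => if i = k then (Term.var k : Term S.sig (Fin (S.sig.ar o))) else Term.ofClosed e) v)) hsep₀
      erw [sep_subst S T t₀ σ₀ (fun i : Fin (S.sig.ar o) => if i = k then (Term.var k : Term S.sig (Fin (S.sig.ar o))) else Term.ofClosed e)] at h2
      exact h2.symm.trans hmθ
    obtain ⟨Z, f, g, hfg, -, -, -⟩ := hC.essUniq _ _ _ _ h3
    rw [ofClosed_rename] at hfg
    have ht₀ : t₀.fv = ∅ := by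
      have h4 := hT0 Z (Term.ofClosed eT) (t₀.rename f) (fv_ofClosed eT) hfg.symm
      rw [fv_rename] at h4
      exact Set.image_eq_empty.mp h4
    have hNfv : (sep (S := S) t₀ σ₀).fv = ∅ := by
      rw [sep, fv_subst, fv_inR, ht₀]
      simp
    have hNs : (sep (S := S) t₀ σ₀).subst (fun v => Term.inL ((fun i : Fin (S.sig.ar o) => if i = k then (Term.var k : Term S.sig (Fin (S.sig.ar o))) else Term.ofClosed e) v))
        = sep t₀ σ₀ := by
      rw [subst_closed hNfv _ (fun v => Term.var v), subst_var]
    have h2' := Theory.Eq.subst (fun v => Term.inL ((fun i : Fin (S.sig.ar o) => if i = k then (Term.var k : Term S.sig (Fin (S.sig.ar o))) else Term.ofClosed e) v)) hsep₀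
    erw [hNs] at h2'
    have hmE := (hsep₀.trans h2'.symm).trans hmθ
    have h5 := Theory.Eq.subst (fun i : Fin (S.sig.ar o) => if i = k then Eps S T eT W else B i) hmE
    erw [Eps_subst] at h5
    have h6 : (Term.op (Sum.inl o) (fun i : Fin (S.sig.ar o) => if i = k then Eps S T eT (Fin (S.sig.ar o)) else .var i) : Term (S.sig.sum T.sig) (Fin (S.sig.ar o))).subst (fun i : Fin (S.sig.ar o) => if i = k then Eps S T eT W else B i)
        = (Term.op (Sum.inl o) (fun i : Fin (S.sig.ar o) => if i = k then Eps S T eT W else B i)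
            : Term (S.sig.sum T.sig) W) := by
      erw [op_subst]
      congr 1
      refine funext fun (i : Fin (S.sig.ar o)) => ?_
      by_cases hik : i = k
      · simp [hik, Eps_subst]
      · simp [hik, var_subst]
    erw [h6] at h5
    refine Theory.Eq.trans (Theory.Eq.congr _ (fun i => ?_)) h5
    by_cases hik : i = k
    · erw [if_pos hik, if_pos hik]; exact Theory.Eq.refl _
    · erw [if_neg hik, if_neg hik]; exact Theory.Eq.refl _
  -- The main mixed term `(x ◦ y) ⋄ (z ◦ w)` over `Fin 4`.
  obtain ⟨t, σ, hsep⟩ := hC.separation (app2 (Term.inL (B := T.sig) d) (app2 (Term.inR (A := S.sig) c) (.var (0 : Fin 4)) (.var 1)) (app2 (Term.inR (A := S.sig) c) (.var (2 : Fin 4)) (.var 3)))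
  -- Instance: rename z ↦ x, w ↦ y and use idempotence.
  have h5 := Theory.Eq.subst (fun v : Fin 4 => Term.inL ((fun v : Fin 4 => (Term.var ((fun v : Fin 4 => if v = 2 then (0 : Fin 4) else if v = 3 then 1 else v) v) : Term S.sig (Fin 4))) v)) hsep
  erw [sep_subst S T t σ (fun v : Fin 4 => (Term.var ((fun v : Fin 4 => if v = 2 then (0 : Fin 4) else if v = 3 then 1 else v) v) : Term S.sig (Fin 4)))] at h5
  erw [app2_subst, app2_subst, app2_subst] at h5
  have h5' : C.U.Eq (app2 (Term.inL (B := T.sig) d) (app2 (Term.inR (A := S.sig) c) (.var (0 : Fin 4)) (.var 1)) (app2 (Term.inR (A := S.sig) c) (.var (0 : Fin 4)) (.var 1))) (sep t (fun n : Nat => (σ n).subst (fun v : Fin 4 => (Term.var ((fun v : Fin 4 => if v = 2 then (0 : Fin 4) else if v = 3 then 1 else v) v) : Term S.sig (Fin 4))))) := h5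
  clear h5
  -- compare with the separated form of `x ◦ y`
  have hXY : sep (S := S) (T := T) c (fun n : Nat => if n = 0 then (Term.var 0 : Term S.sig (Fin 4)) else Term.var 1) = (app2 (Term.inR (A := S.sig) c) (.var (0 : Fin 4)) (.var 1)) := by
    unfold sep app2
    congr 1
    funext n'
    by_cases h : n' = 0
    · simp [h, inL_var]
    · simp [h, inL_var]
  have h7 : C.U.Eq (sep t (fun n : Nat => (σ n).subst (fun v : Fin 4 => (Term.var ((fun v : Fin 4 => if v = 2 then (0 : Fin 4) else if v = 3 then 1 else v) v) : Term S.sig (Fin 4))))) (sep c (fun n : Nat => if n = 0 then (Term.var 0 : Term S.sig (Fin 4)) else Term.var 1)) := by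
    rw [hXY]
    exact h5'.symm.trans (hidem _)
  obtain ⟨Z, f, g, hfg, hff, hgg, hfgx⟩ := hC.essUniq t c (fun n : Nat => (σ n).subst (fun v : Fin 4 => (Term.var ((fun v : Fin 4 => if v = 2 then (0 : Fin 4) else if v = 3 then 1 else v) v) : Term S.sig (Fin 4)))) (fun n : Nat => if n = 0 then (Term.var 0 : Term S.sig (Fin 4)) else Term.var 1) h7
  have hgne : g 0 ≠ g 1 := by
    intro hg
    have h8 : S.Eq (Term.var (0 : Fin 4)) (.var 1) := (hgg 0 1).mp hg
    have h9 := hS1 (Fin 4) 1 _ h8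
    have h10 : (0 : Fin 4) ∈ ({1} : Set (Fin 4)) := h9 rfl
    rw [Set.mem_singleton_iff] at h10
    exact absurd h10 (by decide)
  have hC1 : ∀ i, i ∈ t.fv → f i = g 0 ∨ f i = g 1 := by
    intro i hi
    by_cases hfi : f i = g 1
    · exact Or.inr hfi
    refine Or.inl ?_
    have h9 := Theory.Eq.subst (fun ζ => if ζ = g 1 then Term.ofClosed eT else Term.var ζ) hfg
    have h10 : (c.rename g).subst (fun ζ => if ζ = g 1 then Term.ofClosed eT else Term.var ζ)
        = c.subst (fun n' => if g n' = g 1 then Term.ofClosed eT else Term.var (g n')) := by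
      rw [rename_eq_subst, subst_subst]
      rfl
    have h11 : c.subst (fun n' => if g n' = g 1 then Term.ofClosed eT else Term.var (g n'))
        = app2 c (.var (g 0)) (Term.ofClosed eT) := by
      refine substCongr ?_
      intro v hv
      have hv' := hc hv
      simp only [Set.mem_insert_iff, Set.mem_singleton_iff] at hv'
      rcases hv' with h | h
      · subst h; rw [if_neg hgne, if_pos rfl]
      · subst h; rw [if_pos rfl, if_neg (by decide)]
    have h12 : T.Eq (app2 c (.var (g 0)) (Term.ofClosed eT)) (.var (g 0)) := by
      have h12' := Theory.Eq.subst (fun _ : Nat => (Term.var (g 0) : Term T.sig Z)) hcu1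
      rw [app2_subst, ofClosed_subst] at h12'
      exact h12'
    rw [h10, h11] at h9
    have h13 := h9.trans h12
    have h14 := hT1 Z (g 0) _ h13
    have h15 : f i ∈ ((t.rename f).subst
        (fun ζ => if ζ = g 1 then Term.ofClosed eT else Term.var ζ)).fv := by
      rw [fv_subst]
      refine Set.mem_biUnion (x := f i) ?_ ?_
      · rw [fv_rename]; exact ⟨i, hi, rfl⟩
      · show f i ∈ (if f i = g 1 then Term.ofClosed eT else Term.var (f i)).fv
        rw [if_neg hfi]
        exact rfl
    have h16 := h14 h15
    rwa [Set.mem_singleton_iff] at h16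
  have hP0eq : ∀ i, f i = g 0 → S.Eq ((σ i).subst (fun v : Fin 4 => (Term.var ((fun v : Fin 4 => if v = 2 then (0 : Fin 4) else if v = 3 then 1 else v) v) : Term S.sig (Fin 4)))) (.var 0) := by
    intro i h
    exact (hfgx i 0).mp h
  have hP1eq : ∀ i, f i = g 1 → S.Eq ((σ i).subst (fun v : Fin 4 => (Term.var ((fun v : Fin 4 => if v = 2 then (0 : Fin 4) else if v = 3 then 1 else v) v) : Term S.sig (Fin 4)))) (.var 1) := by
    intro i h
    exact (hfgx i 1).mp h
  have hfv0 : ∀ i, f i = g 0 → ∀ v ∈ (σ i).fv, v = 0 ∨ v = 2 := by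
    intro i h v hv
    have h16 := hS1 (Fin 4) 0 _ (hP0eq i h)
    have hmem : (fun v : Fin 4 => if v = 2 then (0 : Fin 4) else if v = 3 then 1 else v) v ∈ ((σ i).subst (fun v : Fin 4 => (Term.var ((fun v : Fin 4 => if v = 2 then (0 : Fin 4) else if v = 3 then 1 else v) v) : Term S.sig (Fin 4)))).fv := by
      rw [fv_subst]
      exact Set.mem_biUnion hv rfl
    have h17 := h16 hmem
    rw [Set.mem_singleton_iff] at h17
    exact (by decide : ∀ w : Fin 4, (fun v : Fin 4 => if v = 2 then (0 : Fin 4) else if v = 3 then 1 else v) w = 0 → w = 0 ∨ w = 2) v h17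
  have hfv1 : ∀ i, f i = g 1 → ∀ v ∈ (σ i).fv, v = 1 ∨ v = 3 := by
    intro i h v hv
    have h16 := hS1 (Fin 4) 1 _ (hP1eq i h)
    have hmem : (fun v : Fin 4 => if v = 2 then (0 : Fin 4) else if v = 3 then 1 else v) v ∈ ((σ i).subst (fun v : Fin 4 => (Term.var ((fun v : Fin 4 => if v = 2 then (0 : Fin 4) else if v = 3 then 1 else v) v) : Term S.sig (Fin 4)))).fv := by
      rw [fv_subst]
      exact Set.mem_biUnion hv rfl
    have h17 := h16 hmem
    rw [Set.mem_singleton_iff] at h17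
    exact (by decide : ∀ w : Fin 4, (fun v : Fin 4 => if v = 2 then (0 : Fin 4) else if v = 3 then 1 else v) w = 1 → w = 1 ∨ w = 3) v h17
  -- Substitute `y ↦ Ε`, `z ↦ Ε` in the main equation.
  have hGL : C.U.Eq (app2 (Term.inL (B := T.sig) d)
        (app2 (Term.inR (A := S.sig) c) (.var (0:Fin 4)) (Eps S T eT (Fin 4)))
        (app2 (Term.inR (A := S.sig) c) (Eps S T eT (Fin 4)) (.var 3)))
      (Term.inL (B := T.sig) (app2 d (.var (0 : Fin 4)) (.var 3))) := by
    have hcongr : C.U.Eq (app2 (Term.inL (B := T.sig) d)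
          (app2 (Term.inR (A := S.sig) c) (.var (0:Fin 4)) (Eps S T eT (Fin 4)))
          (app2 (Term.inR (A := S.sig) c) (Eps S T eT (Fin 4)) (.var 3)))
        (app2 (Term.inL (B := T.sig) d) (.var 0) (.var 3)) := by
      refine eq_substCongr C.U (Term.inL d) ?_
      intro v _
      by_cases h : v = 0
      · rw [if_pos h, if_pos h]; exact hunitR _
      · rw [if_neg h, if_neg h]; exact hunitL _
    refine hcongr.trans ?_
    rw [inL_app2]
    exact Theory.Eq.refl _
  have h18 := Theory.Eq.subst (fun v : Fin 4 => if v = 1 then (Eps S T eT (Fin 4)) else if v = 2 then (Eps S T eT (Fin 4)) else (Term.var v : Term (S.sig.sum T.sig) (Fin 4))) hsep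
  erw [app2_subst, app2_subst, app2_subst] at h18
  have h18' : C.U.Eq (app2 (Term.inL (B := T.sig) d)
        (app2 (Term.inR (A := S.sig) c) (.var (0:Fin 4)) (Eps S T eT (Fin 4)))
        (app2 (Term.inR (A := S.sig) c) (Eps S T eT (Fin 4)) (.var 3)))
      ((sep (S := S) t σ).subst (fun v : Fin 4 => if v = 1 then (Eps S T eT (Fin 4)) else if v = 2 then (Eps S T eT (Fin 4)) else (Term.var v : Term (S.sig.sum T.sig) (Fin 4)))) := h18
  clear h18
  have hsepθ : (sep (S := S) t σ).subst (fun v : Fin 4 => if v = 1 then (Eps S T eT (Fin 4)) else if v = 2 then (Eps S T eT (Fin 4)) else (Term.var v : Term (S.sig.sum T.sig) (Fin 4)))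
      = (Term.inR t).subst (fun i => (Term.inL (σ i)).subst (fun v : Fin 4 => if v = 1 then (Eps S T eT (Fin 4)) else if v = 2 then (Eps S T eT (Fin 4)) else (Term.var v : Term (S.sig.sum T.sig) (Fin 4)))) := by
    unfold sep
    rw [subst_subst]
  have hmid : C.U.Eq ((Term.inR t).subst (fun i => (Term.inL (σ i)).subst (fun v : Fin 4 => if v = 1 then (Eps S T eT (Fin 4)) else if v = 2 then (Eps S T eT (Fin 4)) else (Term.var v : Term (S.sig.sum T.sig) (Fin 4)))))
      ((Term.inR t).subst (fun i => (Term.inR ((fun i : Nat => if (f i = g 0 ∧ (2:Fin 4) ∉ (σ i).fv) ∨ (f i = g 1 ∧ (1:Fin 4) ∉ (σ i).fv) then (Term.var i : Term T.sig Nat) else Term.ofClosed eT) i)).subst (fun n => Term.inL ((fun i : Nat => if f i = g 0 ∧ (2:Fin 4) ∉ (σ i).fv then (Term.var 0 : Term S.sig (Fin 4)) else Term.var 3) n)))) := by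
    refine eq_substCongr C.U (Term.inR t) ?_
    intro i hi
    erw [fv_inR] at hi
    rcases hC1 i hi with hgi | hgi
    · have hnot1 : ¬ f i = g 1 := fun hco => hgne (hgi.symm.trans hco)
      by_cases h2m : (2:Fin 4) ∈ (σ i).fv
      · have hR : (Term.inR ((fun i : Nat => if (f i = g 0 ∧ (2:Fin 4) ∉ (σ i).fv) ∨ (f i = g 1 ∧ (1:Fin 4) ∉ (σ i).fv) then (Term.var i : Term T.sig Nat) else Term.ofClosed eT) i)).subst (fun n => Term.inL ((fun i : Nat => if f i = g 0 ∧ (2:Fin 4) ∉ (σ i).fv then (Term.var 0 : Term S.sig (Fin 4)) else Term.var 3) n)) = (Eps S T eT (Fin 4)) := by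
          rw [show (fun i : Nat => if (f i = g 0 ∧ (2:Fin 4) ∉ (σ i).fv) ∨ (f i = g 1 ∧ (1:Fin 4) ∉ (σ i).fv) then (Term.var i : Term T.sig Nat) else Term.ofClosed eT) i = Term.ofClosed eT from if_neg (by
            rintro (⟨-, hno⟩ | ⟨hf1, -⟩)
            · exact hno h2m
            · exact hnot1 hf1)]
          rw [inR_ofClosed, ofClosed_subst, Eps_eq]
        rw [hR]
        exact gaplus S T C eT hop (fun v : Fin 4 => if v = 1 then (Eps S T eT (Fin 4)) else if v = 2 then (Eps S T eT (Fin 4)) else (Term.var v : Term (S.sig.sum T.sig) (Fin 4))) 2 rfl (σ i) h2m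
      · have hfv : ∀ v ∈ (σ i).fv, v = 0 := by
          intro v hv
          rcases hfv0 i hgi v hv with h | h
          · exact h
          · exact absurd (h ▸ hv) h2m
        have hTheq : (Term.inL (σ i)).subst (fun v : Fin 4 => if v = 1 then (Eps S T eT (Fin 4)) else if v = 2 then (Eps S T eT (Fin 4)) else (Term.var v : Term (S.sig.sum T.sig) (Fin 4))) = Term.inL (σ i) := by
          have hag : ∀ v ∈ (Term.inL (B := T.sig) (σ i)).fv,
              (fun v : Fin 4 => if v = 1 then (Eps S T eT (Fin 4)) else if v = 2 then (Eps S T eT (Fin 4)) else (Term.var v : Term (S.sig.sum T.sig) (Fin 4))) v = (fun w : Fin 4 => (Term.var w : Term (S.sig.sum T.sig) (Fin 4))) v := by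
            intro v hv
            rw [fv_inL] at hv
            rw [hfv v hv]
            rfl
          rw [substCongr hag, subst_var]
        have hSeq : S.Eq (σ i) (.var 0) := by
          have h20 := hP0eq i hgi
          have hag2 : ∀ v ∈ (σ i).fv,
              (fun v : Fin 4 => (Term.var ((fun v : Fin 4 => if v = 2 then (0 : Fin 4) else if v = 3 then 1 else v) v) : Term S.sig (Fin 4))) v = (fun w : Fin 4 => (Term.var w : Term S.sig (Fin 4))) v := by
            intro v hv
            rw [hfv v hv]
            rfl
          rwa [substCongr hag2, subst_var] at h20
        have hR : (Term.inR ((fun i : Nat => if (f i = g 0 ∧ (2:Fin 4) ∉ (σ i).fv) ∨ (f i = g 1 ∧ (1:Fin 4) ∉ (σ i).fv) then (Term.var i : Term T.sig Nat) else Term.ofClosed eT) i)).subst (fun n => Term.inL ((fun i : Nat => if f i = g 0 ∧ (2:Fin 4) ∉ (σ i).fv then (Term.var 0 : Term S.sig (Fin 4)) else Term.var 3) n))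
            = (Term.var 0 : Term (S.sig.sum T.sig) (Fin 4)) := by
          rw [show (fun i : Nat => if (f i = g 0 ∧ (2:Fin 4) ∉ (σ i).fv) ∨ (f i = g 1 ∧ (1:Fin 4) ∉ (σ i).fv) then (Term.var i : Term T.sig Nat) else Term.ofClosed eT) i = (Term.var i : Term T.sig Nat) from if_pos (Or.inl ⟨hgi, h2m⟩)]
          show Term.inL ((fun i : Nat => if f i = g 0 ∧ (2:Fin 4) ∉ (σ i).fv then (Term.var 0 : Term S.sig (Fin 4)) else Term.var 3) i) = _
          rw [show (fun i : Nat => if f i = g 0 ∧ (2:Fin 4) ∉ (σ i).fv then (Term.var 0 : Term S.sig (Fin 4)) else Term.var 3) i = (Term.var 0 : Term S.sig (Fin 4)) from if_pos ⟨hgi, h2m⟩]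
          rfl
        rw [hTheq, hR]
        exact hC.containsS _ _ hSeq
    · have hnot0 : ¬ f i = g 0 := fun hco => hgne (hco.symm.trans hgi)
      by_cases h1m : (1:Fin 4) ∈ (σ i).fv
      · have hR : (Term.inR ((fun i : Nat => if (f i = g 0 ∧ (2:Fin 4) ∉ (σ i).fv) ∨ (f i = g 1 ∧ (1:Fin 4) ∉ (σ i).fv) then (Term.var i : Term T.sig Nat) else Term.ofClosed eT) i)).subst (fun n => Term.inL ((fun i : Nat => if f i = g 0 ∧ (2:Fin 4) ∉ (σ i).fv then (Term.var 0 : Term S.sig (Fin 4)) else Term.var 3) n)) = (Eps S T eT (Fin 4)) := by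
          rw [show (fun i : Nat => if (f i = g 0 ∧ (2:Fin 4) ∉ (σ i).fv) ∨ (f i = g 1 ∧ (1:Fin 4) ∉ (σ i).fv) then (Term.var i : Term T.sig Nat) else Term.ofClosed eT) i = Term.ofClosed eT from if_neg (by
            rintro (⟨hf0, -⟩ | ⟨-, hno⟩)
            · exact hnot0 hf0
            · exact hno h1m)]
          rw [inR_ofClosed, ofClosed_subst, Eps_eq]
        rw [hR]
        exact gaplus S T C eT hop (fun v : Fin 4 => if v = 1 then (Eps S T eT (Fin 4)) else if v = 2 then (Eps S T eT (Fin 4)) else (Term.var v : Term (S.sig.sum T.sig) (Fin 4))) 1 rfl (σ i) h1m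
      · have hfv : ∀ v ∈ (σ i).fv, v = 3 := by
          intro v hv
          rcases hfv1 i hgi v hv with h | h
          · exact absurd (h ▸ hv) h1m
          · exact h
        have hTheq : (Term.inL (σ i)).subst (fun v : Fin 4 => if v = 1 then (Eps S T eT (Fin 4)) else if v = 2 then (Eps S T eT (Fin 4)) else (Term.var v : Term (S.sig.sum T.sig) (Fin 4))) = Term.inL (σ i) := by
          have hag : ∀ v ∈ (Term.inL (B := T.sig) (σ i)).fv,
              (fun v : Fin 4 => if v = 1 then (Eps S T eT (Fin 4)) else if v = 2 then (Eps S T eT (Fin 4)) else (Term.var v : Term (S.sig.sum T.sig) (Fin 4))) v = (fun w : Fin 4 => (Term.var w : Term (S.sig.sum T.sig) (Fin 4))) v := by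
            intro v hv
            rw [fv_inL] at hv
            rw [hfv v hv]
            rfl
          rw [substCongr hag, subst_var]
        have hSeq : S.Eq (σ i) (.var 3) := by
          have h20 := hP1eq i hgi
          have h21 := Theory.Eq.subst
            (fun v : Fin 4 => (Term.var (if v = 1 then (3:Fin 4) else v) : Term S.sig (Fin 4))) h20
          rw [subst_subst] at h21
          have h21' : S.Eq ((σ i).subst (fun v : Fin 4 =>
              (Term.var (if (fun v : Fin 4 => if v = 2 then (0 : Fin 4) else if v = 3 then 1 else v) v = 1 then (3:Fin 4) else (fun v : Fin 4 => if v = 2 then (0 : Fin 4) else if v = 3 then 1 else v) v) : Term S.sig (Fin 4)))) (.var 3) := h21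
          have hag2 : ∀ v ∈ (σ i).fv, (fun v : Fin 4 =>
              (Term.var (if (fun v : Fin 4 => if v = 2 then (0 : Fin 4) else if v = 3 then 1 else v) v = 1 then (3:Fin 4) else (fun v : Fin 4 => if v = 2 then (0 : Fin 4) else if v = 3 then 1 else v) v) : Term S.sig (Fin 4))) v
              = (fun w : Fin 4 => (Term.var w : Term S.sig (Fin 4))) v := by
            intro v hv
            rw [hfv v hv]
            rfl
          rwa [substCongr hag2, subst_var] at h21'
        have hR : (Term.inR ((fun i : Nat => if (f i = g 0 ∧ (2:Fin 4) ∉ (σ i).fv) ∨ (f i = g 1 ∧ (1:Fin 4) ∉ (σ i).fv) then (Term.var i : Term T.sig Nat) else Term.ofClosed eT) i)).subst (fun n => Term.inL ((fun i : Nat => if f i = g 0 ∧ (2:Fin 4) ∉ (σ i).fv then (Term.var 0 : Term S.sig (Fin 4)) else Term.var 3) n))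
            = (Term.var 3 : Term (S.sig.sum T.sig) (Fin 4)) := by
          rw [show (fun i : Nat => if (f i = g 0 ∧ (2:Fin 4) ∉ (σ i).fv) ∨ (f i = g 1 ∧ (1:Fin 4) ∉ (σ i).fv) then (Term.var i : Term T.sig Nat) else Term.ofClosed eT) i = (Term.var i : Term T.sig Nat) from if_pos (Or.inr ⟨hgi, h1m⟩)]
          show Term.inL ((fun i : Nat => if f i = g 0 ∧ (2:Fin 4) ∉ (σ i).fv then (Term.var 0 : Term S.sig (Fin 4)) else Term.var 3) i) = _
          rw [show (fun i : Nat => if f i = g 0 ∧ (2:Fin 4) ∉ (σ i).fv then (Term.var 0 : Term S.sig (Fin 4)) else Term.var 3) i = (Term.var 3 : Term S.sig (Fin 4)) from if_neg (by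
            rintro ⟨hf0, -⟩
            exact hnot0 hf0)]
          rfl
        rw [hTheq, hR]
        exact hC.containsS _ _ hSeq
  have hsep2 : sep (S := S) (t.subst (fun i : Nat => if (f i = g 0 ∧ (2:Fin 4) ∉ (σ i).fv) ∨ (f i = g 1 ∧ (1:Fin 4) ∉ (σ i).fv) then (Term.var i : Term T.sig Nat) else Term.ofClosed eT)) (fun i : Nat => if f i = g 0 ∧ (2:Fin 4) ∉ (σ i).fv then (Term.var 0 : Term S.sig (Fin 4)) else Term.var 3)
      = (Term.inR t).subst (fun i => (Term.inR ((fun i : Nat => if (f i = g 0 ∧ (2:Fin 4) ∉ (σ i).fv) ∨ (f i = g 1 ∧ (1:Fin 4) ∉ (σ i).fv) then (Term.var i : Term T.sig Nat) else Term.ofClosed eT) i)).subst (fun n => Term.inL ((fun i : Nat => if f i = g 0 ∧ (2:Fin 4) ∉ (σ i).fv then (Term.var 0 : Term S.sig (Fin 4)) else Term.var 3) n))) := by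
    unfold sep
    rw [inR_subst, subst_subst]
  have hbig : C.U.Eq (sep (S := S) (T := T) (.var 0) (fun _ => (app2 d (.var (0 : Fin 4)) (.var 3))))
      (sep (t.subst (fun i : Nat => if (f i = g 0 ∧ (2:Fin 4) ∉ (σ i).fv) ∨ (f i = g 1 ∧ (1:Fin 4) ∉ (σ i).fv) then (Term.var i : Term T.sig Nat) else Term.ofClosed eT)) (fun i : Nat => if f i = g 0 ∧ (2:Fin 4) ∉ (σ i).fv then (Term.var 0 : Term S.sig (Fin 4)) else Term.var 3)) := by
    rw [hsep2]
    have hstart : C.U.Eq (Term.inL (B := T.sig) (app2 d (.var (0 : Fin 4)) (.var 3)))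
        ((Term.inR t).subst (fun i => (Term.inL (σ i)).subst (fun v : Fin 4 => if v = 1 then (Eps S T eT (Fin 4)) else if v = 2 then (Eps S T eT (Fin 4)) else (Term.var v : Term (S.sig.sum T.sig) (Fin 4))))) := by
      rw [← hsepθ]
      exact hGL.symm.trans h18'
    exact hstart.trans hmid
  obtain ⟨Z₂, f₂, g₂, hfg₂, hu1, hu2, hx₂⟩ :=
    hC.essUniq (.var 0) (t.subst (fun i : Nat => if (f i = g 0 ∧ (2:Fin 4) ∉ (σ i).fv) ∨ (f i = g 1 ∧ (1:Fin 4) ∉ (σ i).fv) then (Term.var i : Term T.sig Nat) else Term.ofClosed eT)) (fun _ => (app2 d (.var (0 : Fin 4)) (.var 3))) (fun i : Nat => if f i = g 0 ∧ (2:Fin 4) ∉ (σ i).fv then (Term.var 0 : Term S.sig (Fin 4)) else Term.var 3) hbig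
  have hfg₂' : T.Eq (Term.var (f₂ 0) : Term T.sig Z₂) ((t.subst (fun i : Nat => if (f i = g 0 ∧ (2:Fin 4) ∉ (σ i).fv) ∨ (f i = g 1 ∧ (1:Fin 4) ∉ (σ i).fv) then (Term.var i : Term T.sig Nat) else Term.ofClosed eT)).rename g₂) := hfg₂
  have hsub₂ := hT1 Z₂ (f₂ 0) _ hfg₂'.symm
  by_cases hemp : (t.subst (fun i : Nat => if (f i = g 0 ∧ (2:Fin 4) ∉ (σ i).fv) ∨ (f i = g 1 ∧ (1:Fin 4) ∉ (σ i).fv) then (Term.var i : Term T.sig Nat) else Term.ofClosed eT)).fv = ∅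
  · have h22 := hT0 Z₂ ((t.subst (fun i : Nat => if (f i = g 0 ∧ (2:Fin 4) ∉ (σ i).fv) ∨ (f i = g 1 ∧ (1:Fin 4) ∉ (σ i).fv) then (Term.var i : Term T.sig Nat) else Term.ofClosed eT)).rename g₂) (.var (f₂ 0))
      (by rw [fv_rename, hemp, Set.image_empty]) hfg₂'.symm
    have h23 : f₂ 0 ∈ (Term.var (f₂ 0) : Term T.sig Z₂).fv := rfl
    rw [h22] at h23
    exact h23
  · obtain ⟨j, hj⟩ := Set.nonempty_iff_ne_empty.mpr hemp
    have hgj : g₂ j = f₂ 0 := by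
      have hm1 : g₂ j ∈ ((t.subst (fun i : Nat => if (f i = g 0 ∧ (2:Fin 4) ∉ (σ i).fv) ∨ (f i = g 1 ∧ (1:Fin 4) ∉ (σ i).fv) then (Term.var i : Term T.sig Nat) else Term.ofClosed eT)).rename g₂).fv := by
        rw [fv_rename]; exact ⟨j, hj, rfl⟩
      have := hsub₂ hm1
      rwa [Set.mem_singleton_iff] at this
    have hSj : S.Eq (app2 d (.var (0 : Fin 4)) (.var 3)) ((fun i : Nat => if f i = g 0 ∧ (2:Fin 4) ∉ (σ i).fv then (Term.var 0 : Term S.sig (Fin 4)) else Term.var 3) j) := (hx₂ 0 j).mp hgj.symm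
    by_cases hk : f j = g 0 ∧ (2:Fin 4) ∉ (σ j).fv
    · have hSj' : S.Eq (app2 d (.var (0 : Fin 4)) (.var 3)) (.var (0 : Fin 4)) := by
        rwa [show (fun i : Nat => if f i = g 0 ∧ (2:Fin 4) ∉ (σ i).fv then (Term.var 0 : Term S.sig (Fin 4)) else Term.var 3) j = (Term.var 0 : Term S.sig (Fin 4)) from if_pos hk] at hSj
      have h24 := Theory.Eq.subst
        (fun v : Fin 4 => if v = 0 then Term.ofClosed eS else (Term.var 0 : Term S.sig Nat)) hSj'
      rw [app2_subst] at h24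
      have h24' : S.Eq (app2 d (Term.ofClosed eS) (.var 0)) (Term.ofClosed eS) := h24
      have h25 : S.Eq (Term.ofClosed (V := Nat) eS) (.var 0) := h24'.symm.trans hdu2
      have h26 := hS0 Nat (Term.ofClosed eS) (.var 0) (fv_ofClosed eS) h25
      have h27 : (0:Nat) ∈ (Term.var (0:Nat) : Term S.sig Nat).fv := rfl
      rw [h26] at h27
      exact h27
    · have hSj' : S.Eq (app2 d (.var (0 : Fin 4)) (.var 3)) (.var (3 : Fin 4)) := by
        rwa [show (fun i : Nat => if f i = g 0 ∧ (2:Fin 4) ∉ (σ i).fv then (Term.var 0 : Term S.sig (Fin 4)) else Term.var 3) j = (Term.var 3 : Term S.sig (Fin 4)) from if_neg hk] at hSj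
      have h24 := Theory.Eq.subst
        (fun v : Fin 4 => if v = 3 then Term.ofClosed eS else (Term.var 0 : Term S.sig Nat)) hSj'
      rw [app2_subst] at h24
      have h24' : S.Eq (app2 d (.var 0) (Term.ofClosed eS)) (Term.ofClosed eS) := h24
      have h25 : S.Eq (Term.ofClosed (V := Nat) eS) (.var 0) := h24'.symm.trans hdu1
      have h26 := hS0 Nat (Term.ofClosed eS) (.var 0) (fv_ofClosed eS) h25
      have h27 : (0:Nat) ∈ (Term.var (0:Nat) : Term S.sig Nat).fv := rfl
      rw [h26] at h27
      exact h27

end NoGoAux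

/-- **No-go theorem: idempotence and units.** Under the hypotheses of the
times-over-plus theorem, if moreover the binary term `⋄` of `𝕊` is idempotent, then
there is no composite theory of `𝕊` and `𝕋`. -/
theorem no_composite_idempotence_units (S T : Theory)
    (hS0 : VarFree0 S) (hS1 : VarSingle S) (hSu : HasUnits S)
    (d : Term S.sig Nat) (hd : d.fv ⊆ {0, 1}) (eS : Term S.sig Empty)
    (hdu1 : S.Eq (app2 d (.var 0) (Term.ofClosed eS)) (.var (0 : Nat)))
    (hdu2 : S.Eq (app2 d (Term.ofClosed eS) (.var 0)) (.var (0 : Nat)))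
    (hT0 : VarFree0 T) (hT1 : VarSingle T)
    (c : Term T.sig Nat) (hc : c.fv ⊆ {0, 1}) (eT : Term T.sig Empty)
    (hcu1 : T.Eq (app2 c (.var 0) (Term.ofClosed eT)) (.var (0 : Nat)))
    (hcu2 : T.Eq (app2 c (Term.ofClosed eT) (.var 0)) (.var (0 : Nat)))
    (hdidem : S.Eq (d.subst (fun _ => .var (0 : Nat))) (.var 0)) :
    ∀ C : Composite S T, ¬ IsComposite C := by
  intro C hC
  exact NoGoAux.main S T hS0 hS1 hSu d hd eS hdu1 hdu2 hT0 hT1 c hc eT hcu1 hcu2 hdidem C hC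
end
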